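/- arXiv:1508.04315 — 5 statements merged into one kernel-verified Lean document; each statement's English description precedes it below -/
import Mathlib

section
/- For every positive integer k and pairwise distinct real numbers x₁, …, x_k, the multiple series ∑_{n₁=1}^∞ ⋯ ∑_{n_k=1}^∞ (x₁^{n₁}⋯x_k^{n_k})/(n₁+⋯+n_k)! equals x₁⋯x_k · [x₁,…,x_k; z ↦ z^{k-1}·exp_k(z)], where exp_k(z) = ∑_{n=0}^∞ z^n/(n+k)!. -/
/-- Divided difference of `f` at the nodes `x 0, …, x (k-1)` (Lagrange form, which agrees
with the usual recursive definition when the nodes are pairwise distinct). -/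
noncomputable def divDiff {k : ℕ} (x : Fin k → ℝ) (f : ℝ → ℝ) : ℝ :=
  ∑ i, f (x i) / ∏ j ∈ Finset.univ.erase i, (x i - x j)

/-- The `k`-th tail of the exponential series: `exp_k(z) = ∑_{n≥0} z^n/(n+k)!`. -/
noncomputable def expTail (k : ℕ) (z : ℝ) : ℝ :=
  ∑' n : ℕ, z ^ n / (Nat.factorial (n + k))

open Finset Polynomial

noncomputable def hpoly : {k : ℕ} → (Fin k → ℝ) → ℕ → ℝ
  | 0, _, 0 => 1
  | 0, _, _+1 => 0
  | _+1, x, n => ∑ b ∈ Finset.range (n + 1), x 0 ^ b * hpoly (Fin.tail x) (n - b)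

lemma hpoly_zero_zero (x : Fin 0 → ℝ) : hpoly x 0 = 1 := rfl
lemma hpoly_zero_succ (x : Fin 0 → ℝ) (n : ℕ) : hpoly x (n+1) = 0 := rfl
lemma hpoly_succ {k : ℕ} (x : Fin (k+1) → ℝ) (n : ℕ) :
    hpoly x n = ∑ b ∈ Finset.range (n + 1), x 0 ^ b * hpoly (Fin.tail x) (n - b) := rfl

lemma hpoly_one (x : Fin 1 → ℝ) (m : ℕ) : hpoly x m = x 0 ^ m := by
  rw [hpoly_succ, Finset.sum_eq_single m]
  · rw [Nat.sub_self, hpoly_zero_zero, mul_one]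
  · intro b hb hbm
    have hblt : b < m := by
      have := Finset.mem_range.mp hb; omega
    rw [show m - b = (m - b - 1) + 1 by omega, hpoly_zero_succ, mul_zero]
  · intro h; exact absurd (Finset.self_mem_range_succ m) h

lemma sum_antidiagonalTuple (k : ℕ) (x : Fin k → ℝ) (n : ℕ) :
    ∑ c ∈ Finset.Nat.antidiagonalTuple k n, ∏ i, x i ^ c i = hpoly x n := by
  induction k generalizing n with
  | zero =>
    cases n with
    | zero => simp [Finset.Nat.antidiagonalTuple_zero_zero, hpoly_zero_zero]
    | succ n => simp [Finset.Nat.antidiagonalTuple_zero_succ, hpoly_zero_succ]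
  | succ k ih =>
    rw [hpoly_succ]
    have : ∑ b ∈ Finset.range (n + 1), x 0 ^ b * hpoly (Fin.tail x) (n - b)
        = ∑ b ∈ Finset.range (n + 1), ∑ c ∈ Finset.Nat.antidiagonalTuple k (n - b),
            x 0 ^ b * ∏ i, Fin.tail x i ^ c i := by
      refine Finset.sum_congr rfl fun b _ => ?_
      rw [← ih, Finset.mul_sum]
    rw [this, Finset.sum_sigma']
    refine Finset.sum_nbij' (fun c => (⟨c 0, Fin.tail c⟩ : (_ : ℕ) × (Fin k → ℕ)))
      (fun p => Fin.cons p.1 p.2) ?_ ?_ ?_ ?_ ?_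
    · intro c hc
      rw [Finset.Nat.mem_antidiagonalTuple] at hc
      have h0 : c 0 + ∑ i, c (Fin.succ i) = n := by rw [← Fin.sum_univ_succ]; exact hc
      simp only [Finset.mem_sigma, Finset.mem_range, Finset.Nat.mem_antidiagonalTuple]
      exact ⟨by omega, by show ∑ i, c (Fin.succ i) = n - c 0; omega⟩
    · intro p hp
      rw [Finset.mem_sigma, Finset.mem_range, Finset.Nat.mem_antidiagonalTuple] at hp
      rw [Finset.Nat.mem_antidiagonalTuple, Fin.sum_cons, hp.2]
      omega
    · intro c _; exact Fin.cons_self_tail c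
    · intro p _; exact Sigma.ext (by simp) (by simp [Fin.tail_cons])
    · intro c _
      rw [Fin.prod_univ_succ]
      rfl

lemma sum_inv_prod_eq_zero {k : ℕ} (hk : 2 ≤ k) (x : Fin k → ℝ) (hx : Function.Injective x) :
    ∑ i : Fin k, (∏ j ∈ Finset.univ.erase i, (x i - x j))⁻¹ = 0 := by
  classical
  have hinj : Set.InjOn x (Finset.univ : Finset (Fin k)) := hx.injOn
  have hne : (Finset.univ : Finset (Fin k)).Nonempty := ⟨⟨0, by omega⟩, mem_univ _⟩
  have h1 := Lagrange.sum_basis hinj hne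
  have h2 := congrArg (fun p => Polynomial.coeff p (k - 1)) h1
  simp only [finset_sum_coeff] at h2
  rw [Polynomial.coeff_one, if_neg (by omega)] at h2
  rw [← h2]
  refine Finset.sum_congr rfl fun i _ => ?_
  have hdeg : (Lagrange.basis Finset.univ x i).natDegree = k - 1 := by
    rw [Lagrange.natDegree_basis hinj (mem_univ i), card_univ, Fintype.card_fin]
  rw [← hdeg, Polynomial.coeff_natDegree, Lagrange.basis, leadingCoeff_prod,
    ← Finset.prod_inv_distrib]
  refine Finset.prod_congr rfl fun j hj => ?_
  rw [Lagrange.basisDivisor, leadingCoeff_mul, leadingCoeff_C,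
    (monic_X_sub_C (x j)).leadingCoeff, mul_one]

lemma erase_univ_succ {k : ℕ} (i' : Fin k) :
    (Finset.univ.erase (Fin.succ i') : Finset (Fin (k+1))) =
      insert 0 ((Finset.univ.erase i').map ⟨Fin.succ, Fin.succ_injective k⟩) := by
  ext j
  cases j using Fin.cases with
  | zero => simp [(Fin.succ_ne_zero i').symm]
  | succ j' => simp [Fin.succ_inj, Fin.succ_ne_zero, eq_comm]

lemma erase_univ_zero {k : ℕ} :
    (Finset.univ.erase (0 : Fin (k+1)) : Finset (Fin (k+1))) =
      Finset.univ.map ⟨Fin.succ, Fin.succ_injective k⟩ := by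
  ext j
  cases j using Fin.cases with
  | zero => simp [fun j' => (Fin.succ_ne_zero j').symm]
  | succ j' => simp [Fin.succ_ne_zero]

lemma key_frac (a y P : ℝ) (ha : a ≠ y) (m : ℕ) :
    a ^ m / ((a - y) * P)
      = y ^ m / ((a - y) * P) + (∑ b ∈ Finset.range m, a ^ b * y ^ (m - 1 - b)) / P := by
  have h := geom_sum₂_mul a y m
  have hay : a - y ≠ 0 := sub_ne_zero_of_ne ha
  have h2 : a ^ m = y ^ m + (∑ b ∈ Finset.range m, a ^ b * y ^ (m - 1 - b)) * (a - y) := by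
    linear_combination -h
  rw [h2, add_div]
  congr 1
  rw [mul_comm (a - y) P, mul_div_mul_right _ _ hay]

lemma divdiff_pow (k : ℕ) : ∀ (x : Fin (k+1) → ℝ), Function.Injective x → ∀ m : ℕ,
    ∑ i, x i ^ m / ∏ j ∈ Finset.univ.erase i, (x i - x j)
      = if k ≤ m then hpoly x (m - k) else 0 := by
  induction k with
  | zero =>
    intro x hx m
    rw [if_pos (Nat.zero_le m), Nat.sub_zero, hpoly_one]
    rw [Fin.sum_univ_one]
    have : (Finset.univ.erase (0 : Fin 1)) = (∅ : Finset (Fin 1)) := by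
      ext j; fin_cases j <;> simp
    rw [this, Finset.prod_empty, div_one]
  | succ k ih =>
    intro x hx m
    set y := x 0 with hy
    set t := Fin.tail x with htdef
    have ht : Function.Injective t := fun i j h => by
      have := hx (show x i.succ = x j.succ from h)
      exact Fin.succ_injective _ this
    have hty : ∀ i', t i' ≠ y := fun i' h => Fin.succ_ne_zero i' (hx h)
    have hP : ∀ i' : Fin (k+1), (∏ j ∈ Finset.univ.erase i', (t i' - t j)) ≠ 0 := by
      intro i'
      refine Finset.prod_ne_zero_iff.mpr fun j hj => ?_
      exact sub_ne_zero_of_ne fun h => (Finset.mem_erase.mp hj).1 (ht h).symm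
    have Dsucc : ∀ i' : Fin (k+1),
        ∏ j ∈ Finset.univ.erase (Fin.succ i'), (x (Fin.succ i') - x j)
          = (t i' - y) * ∏ j ∈ Finset.univ.erase i', (t i' - t j) := by
      intro i'
      rw [erase_univ_succ, Finset.prod_insert (by simp [Fin.succ_ne_zero]), Finset.prod_map]
      rfl
    have D0 : ∏ j ∈ Finset.univ.erase (0 : Fin (k+2)), (x 0 - x j)
        = ∏ j' : Fin (k+1), (y - t j') := by
      rw [erase_univ_zero, Finset.prod_map]; rfl
    rw [Fin.sum_univ_succ]
    have step1 : ∀ i' : Fin (k+1),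
        x (Fin.succ i') ^ m / ∏ j ∈ Finset.univ.erase (Fin.succ i'), (x (Fin.succ i') - x j)
          = y ^ m / ((t i' - y) * ∏ j ∈ Finset.univ.erase i', (t i' - t j))
            + (∑ b ∈ Finset.range m, t i' ^ b * y ^ (m - 1 - b))
                / ∏ j ∈ Finset.univ.erase i', (t i' - t j) := by
      intro i'
      rw [Dsucc i']
      exact key_frac (t i') y _ (hty i') m
    rw [Finset.sum_congr rfl fun i' _ => step1 i', Finset.sum_add_distrib]
    have hzero : x 0 ^ m / ∏ j ∈ Finset.univ.erase (0 : Fin (k+2)), (x 0 - x j)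
        + ∑ i' : Fin (k+1),
            y ^ m / ((t i' - y) * ∏ j ∈ Finset.univ.erase i', (t i' - t j)) = 0 := by
      have : x 0 ^ m / ∏ j ∈ Finset.univ.erase (0 : Fin (k+2)), (x 0 - x j)
          + ∑ i' : Fin (k+1),
              y ^ m / ((t i' - y) * ∏ j ∈ Finset.univ.erase i', (t i' - t j))
            = y ^ m * ∑ i : Fin (k+2), (∏ j ∈ Finset.univ.erase i, (x i - x j))⁻¹ := by
        conv_rhs => rw [Fin.sum_univ_succ]
        rw [mul_add, Finset.mul_sum, div_eq_mul_inv]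
        congr 1
        refine Finset.sum_congr rfl fun i' _ => ?_
        rw [Dsucc i', div_eq_mul_inv]
      rw [this, sum_inv_prod_eq_zero (by omega) x hx, mul_zero]
    rw [← add_assoc, hzero, zero_add]
    have step2 : ∑ i' : Fin (k+1),
        (∑ b ∈ Finset.range m, t i' ^ b * y ^ (m - 1 - b))
          / ∏ j ∈ Finset.univ.erase i', (t i' - t j)
        = ∑ b ∈ Finset.range m, y ^ (m - 1 - b)
            * ∑ i' : Fin (k+1), t i' ^ b / ∏ j ∈ Finset.univ.erase i', (t i' - t j) := by
      simp only [Finset.sum_div]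
      rw [Finset.sum_comm]
      refine Finset.sum_congr rfl fun b _ => ?_
      rw [Finset.mul_sum]
      refine Finset.sum_congr rfl fun i' _ => ?_
      ring
    rw [step2]
    have step3 : ∀ b, (∑ i' : Fin (k+1), t i' ^ b / ∏ j ∈ Finset.univ.erase i', (t i' - t j))
        = if k ≤ b then hpoly t (b - k) else 0 := fun b => ih t ht b
    rw [Finset.sum_congr rfl fun b _ => by rw [step3 b]]
    by_cases hm : k + 1 ≤ m
    · rw [if_pos hm]
      have hsplit : Finset.range m = Finset.Ico 0 m := by rw [Finset.range_eq_Ico]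
      rw [hsplit, ← Finset.sum_Ico_consecutive _ (Nat.zero_le k) (by omega : k ≤ m)]
      have hfirst : ∑ b ∈ Finset.Ico 0 k,
          y ^ (m - 1 - b) * (if k ≤ b then hpoly t (b - k) else 0) = 0 := by
        refine Finset.sum_eq_zero fun b hb => ?_
        rw [if_neg (by have := Finset.mem_Ico.mp hb; omega), mul_zero]
      rw [hfirst, zero_add, Finset.sum_Ico_eq_sum_range]
      have hsecond : ∑ c ∈ Finset.range (m - k),
          y ^ (m - 1 - (k + c)) * (if k ≤ k + c then hpoly t (k + c - k) else 0)
          = ∑ c ∈ Finset.range (m - k), y ^ (m - k - 1 - c) * hpoly t c := by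
        refine Finset.sum_congr rfl fun c hc => ?_
        rw [if_pos (by omega)]
        congr 2 <;> omega
      rw [hsecond]
      rw [hpoly_succ]
      have hrange : m - (k+1) + 1 = m - k := by omega
      rw [hrange]
      rw [← Finset.sum_range_reflect]
      refine Finset.sum_congr rfl fun c hc => ?_
      have hc' := Finset.mem_range.mp hc
      rw [← htdef, ← hy]
      congr 2 <;> omega
    · rw [if_neg hm]
      refine Finset.sum_eq_zero fun b hb => ?_
      rw [if_neg (by have := Finset.mem_range.mp hb; omega), mul_zero]

lemma summable_aux (z : ℝ) (k : ℕ) : Summable fun n : ℕ => z ^ n / (Nat.factorial (n + k)) := by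
  apply Summable.of_abs
  refine Summable.of_nonneg_of_le (fun n => abs_nonneg _) (fun n => ?_)
    (Real.summable_pow_div_factorial |z|)
  rw [abs_div, abs_pow, Nat.abs_cast]
  refine div_le_div_of_nonneg_left (pow_nonneg (abs_nonneg z) n) ?_ ?_
  · exact_mod_cast Nat.factorial_pos n
  · exact_mod_cast Nat.factorial_le (Nat.le_add_right n k)

lemma summable_pi_abs : ∀ (k : ℕ) (g : Fin k → ℕ → ℝ), (∀ i, Summable fun n => |g i n|) →
    Summable fun m : Fin k → ℕ => ∏ i, |g i (m i)| := by
  intro k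
  induction k with
  | zero =>
    intro g _
    exact Summable.of_finite
  | succ k ih =>
    intro g hg
    have h1 : Summable fun p : ℕ × (Fin k → ℕ) =>
        |g 0 p.1| * ∏ i, |g i.succ (p.2 i)| := by
      apply Summable.mul_of_nonneg (hg 0) (ih _ fun i => hg i.succ)
        (fun n => abs_nonneg _) (fun m => Finset.prod_nonneg fun i _ => abs_nonneg _)
    have := (Fin.consEquiv fun _ : Fin (k+1) => ℕ).symm.summable_iff.2 h1
    refine this.congr fun m => ?_
    rw [Fin.prod_univ_succ]
    rfl

lemma summable_F {k : ℕ} (x : Fin k → ℝ) :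
    Summable fun m : Fin k → ℕ =>
      (∏ i, x i ^ (m i + 1)) / (Nat.factorial (∑ i, (m i + 1)) : ℝ) := by
  rw [← summable_abs_iff]
  have hg : ∀ i : Fin k, Summable fun n : ℕ => |x i ^ (n+1) / (Nat.factorial (n+1) : ℝ)| := by
    intro i
    have h1 : Summable fun n : ℕ => |x i| ^ n / (Nat.factorial n : ℝ) :=
      Real.summable_pow_div_factorial |x i|
    have h2 := h1.comp_injective (add_left_injective 1)
    refine h2.congr fun n => ?_
    rw [Function.comp_apply, abs_div, abs_pow, Nat.abs_cast]
  have hbig := summable_pi_abs k (fun i n => x i ^ (n+1) / (Nat.factorial (n+1) : ℝ)) hg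
  refine Summable.of_nonneg_of_le (fun m => abs_nonneg _) (fun m => ?_) hbig
  have heq : ∏ i, |x i ^ (m i + 1) / (Nat.factorial (m i + 1) : ℝ)|
      = (∏ i, |x i| ^ (m i + 1)) / (∏ i, (Nat.factorial (m i + 1) : ℝ)) := by
    rw [← Finset.prod_div_distrib]
    refine Finset.prod_congr rfl fun i _ => ?_
    rw [abs_div, abs_pow, Nat.abs_cast]
  rw [heq, abs_div, abs_prod, Nat.abs_cast]
  have habs : ∏ i, |x i ^ (m i + 1)| = ∏ i, |x i| ^ (m i + 1) :=
    Finset.prod_congr rfl fun i _ => abs_pow _ _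
  rw [habs]
  refine div_le_div_of_nonneg_left (Finset.prod_nonneg fun i _ => pow_nonneg (abs_nonneg _) _)
    ?_ ?_
  · positivity
  · have hdvd := Nat.prod_factorial_dvd_factorial_sum Finset.univ (fun i => m i + 1)
    have hle := Nat.le_of_dvd (Nat.factorial_pos _) hdvd
    calc (∏ i, (Nat.factorial (m i + 1) : ℝ)) = ((∏ i, Nat.factorial (m i + 1) : ℕ) : ℝ) := by
          rw [Nat.cast_prod]
      _ ≤ ((Nat.factorial (∑ i, (m i + 1)) : ℕ) : ℝ) := by exact_mod_cast hle

theorem stmt_13 (k : ℕ) (hk : 1 ≤ k) (x : Fin k → ℝ) (hx : Function.Injective x) :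
    ∑' n : Fin k → ℕ+,
        (∏ i, x i ^ (n i : ℕ)) / (Nat.factorial (∑ i, (n i : ℕ)))
      = (∏ i, x i) * divDiff x (fun z => z ^ (k - 1) * expTail k z) := by
  classical
  obtain ⟨K, rfl⟩ : ∃ K, k = K + 1 := ⟨k - 1, by omega⟩
  have hgsum := summable_F x
  -- Step 1 : reindex to ℕ-tuples
  have e1 : (∑' n : Fin (K+1) → ℕ+, (∏ i, x i ^ (n i : ℕ)) / (Nat.factorial (∑ i, (n i : ℕ)) : ℝ))
      = ∑' m : Fin (K+1) → ℕ, (∏ i, x i ^ (m i + 1)) / (Nat.factorial (∑ i, (m i + 1)) : ℝ) := by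
    rw [← Equiv.tsum_eq (Equiv.piCongrRight fun _ : Fin (K+1) => Equiv.pnatEquivNat.symm)
      (fun n : Fin (K+1) → ℕ+ => (∏ i, x i ^ (n i : ℕ)) / (Nat.factorial (∑ i, (n i : ℕ)) : ℝ))]
    exact tsum_congr fun m => rfl
  -- Step 2 : group by total degree
  have hsig : Summable fun p : (Σ N, Finset.Nat.antidiagonalTuple (K+1) N) =>
      (∏ i, x i ^ ((p.2 : Fin (K+1) → ℕ) i + 1))
        / (Nat.factorial (∑ i, ((p.2 : Fin (K+1) → ℕ) i + 1)) : ℝ) :=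
    (Finset.Nat.sigmaAntidiagonalTupleEquivTuple (K+1)).summable_iff.2 hgsum
  have e2 : (∑' m : Fin (K+1) → ℕ, (∏ i, x i ^ (m i + 1)) / (Nat.factorial (∑ i, (m i + 1)) : ℝ))
      = ∑' N : ℕ, ∑ c ∈ Finset.Nat.antidiagonalTuple (K+1) N,
          (∏ i, x i ^ (c i + 1)) / (Nat.factorial (∑ i, (c i + 1)) : ℝ) := by
    rw [← Equiv.tsum_eq (Finset.Nat.sigmaAntidiagonalTupleEquivTuple (K+1))
      (fun m : Fin (K+1) → ℕ => (∏ i, x i ^ (m i + 1)) / (Nat.factorial (∑ i, (m i + 1)) : ℝ))]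
    have h0 : ∀ p : (Σ N, Finset.Nat.antidiagonalTuple (K+1) N),
        (∏ i, x i ^ ((Finset.Nat.sigmaAntidiagonalTupleEquivTuple (K+1)) p i + 1))
            / (Nat.factorial (∑ i, ((Finset.Nat.sigmaAntidiagonalTupleEquivTuple (K+1)) p i + 1)) : ℝ)
          = (∏ i, x i ^ ((p.2 : Fin (K+1) → ℕ) i + 1))
            / (Nat.factorial (∑ i, ((p.2 : Fin (K+1) → ℕ) i + 1)) : ℝ) := fun p => rfl
    rw [tsum_congr h0, Summable.tsum_sigma hsig]
    refine tsum_congr fun N => ?_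
    refine Eq.trans ?_ (Finset.tsum_subtype (Finset.Nat.antidiagonalTuple (K+1) N)
      (fun c : Fin (K+1) → ℕ => (∏ i, x i ^ (c i + 1)) / (Nat.factorial (∑ i, (c i + 1)) : ℝ)))
    exact tsum_congr fun c => rfl
  -- Step 3 : inner sums
  have e3 : ∀ N : ℕ, ∑ c ∈ Finset.Nat.antidiagonalTuple (K+1) N,
      (∏ i, x i ^ (c i + 1)) / (Nat.factorial (∑ i, (c i + 1)) : ℝ)
      = (∏ i, x i) * (hpoly x N / (Nat.factorial (N + (K+1)) : ℝ)) := by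
    intro N
    have hterm : ∀ c ∈ Finset.Nat.antidiagonalTuple (K+1) N,
        (∏ i, x i ^ (c i + 1)) / (Nat.factorial (∑ i, (c i + 1)) : ℝ)
          = (∏ i, x i) * ((∏ i, x i ^ c i) / (Nat.factorial (N + (K+1)) : ℝ)) := by
      intro c hc
      rw [Finset.Nat.mem_antidiagonalTuple] at hc
      have hsum : ∑ i, (c i + 1) = N + (K+1) := by
        rw [Finset.sum_add_distrib, hc]
        simp
      rw [hsum, mul_div_assoc']
      congr 1
      rw [← Finset.prod_mul_distrib]
      exact Finset.prod_congr rfl fun i _ => by rw [pow_succ']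
    rw [Finset.sum_congr rfl hterm, ← Finset.mul_sum, ← Finset.sum_div, sum_antidiagonalTuple]
  -- Step 4 : the divided difference as a series
  have hsumm_i : ∀ i : Fin (K+1), Summable fun n : ℕ =>
      x i ^ (n + K) / (Nat.factorial (n + (K+1)) : ℝ)
        / ∏ j ∈ Finset.univ.erase i, (x i - x j) := by
    intro i
    refine ((summable_aux (x i) (K+1)).mul_right
      (x i ^ K / ∏ j ∈ Finset.univ.erase i, (x i - x j))).congr fun n => ?_
    rw [div_mul_div_comm, ← pow_add, ← div_div]
  have hterm : ∀ i : Fin (K+1),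
      (x i ^ K * expTail (K+1) (x i)) / ∏ j ∈ Finset.univ.erase i, (x i - x j)
        = ∑' n : ℕ, x i ^ (n + K) / (Nat.factorial (n + (K+1)) : ℝ)
            / ∏ j ∈ Finset.univ.erase i, (x i - x j) := by
    intro i
    rw [expTail, ← tsum_mul_left, ← tsum_div_const]
    exact tsum_congr fun n => by rw [pow_add]; ring
  have e4 : divDiff x (fun z => z ^ (K + 1 - 1) * expTail (K+1) z)
      = ∑' n : ℕ, hpoly x n / (Nat.factorial (n + (K+1)) : ℝ) := by
    rw [divDiff]
    simp only [Nat.add_sub_cancel]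
    rw [Finset.sum_congr rfl fun i _ => hterm i]
    rw [← Summable.tsum_finsetSum fun i _ => hsumm_i i]
    refine tsum_congr fun n => ?_
    have hcomm : ∀ i : Fin (K+1),
        x i ^ (n + K) / (Nat.factorial (n + (K+1)) : ℝ)
            / ∏ j ∈ Finset.univ.erase i, (x i - x j)
          = x i ^ (n + K) / (∏ j ∈ Finset.univ.erase i, (x i - x j))
            / (Nat.factorial (n + (K+1)) : ℝ) := fun i => div_right_comm _ _ _
    rw [Finset.sum_congr rfl fun i _ => hcomm i, ← Finset.sum_div,
      divdiff_pow K x hx (n + K), if_pos (by omega), Nat.add_sub_cancel]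
  rw [e1, e2, tsum_congr e3, e4, tsum_mul_left]
end

section
/- The series ∑_{n₁=1}^∞ ∑_{n₂=1}^∞ ∑_{n₃=1}^∞ (n₁·n₂)/(n₁+n₂+n₃)! equals (5/24)·e. -/
set_option maxHeartbeats 1000000

open Finset

namespace Stmt15Aux

lemma L0 (n : ℕ) : ∑ j ∈ range n, ((j:ℝ)+1) = n*(n+1)/2 := by
  induction n with
  | zero => simp
  | succ n ih => rw [sum_range_succ, ih]; push_cast; ring

lemma L1 (n : ℕ) : ∑ j ∈ range n, ((j:ℝ)+1)*((j:ℝ)+2) = n*(n+1)*(n+2)/3 := by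
  induction n with
  | zero => simp
  | succ n ih => rw [sum_range_succ, ih]; push_cast; ring

lemma L2 (n : ℕ) : ∑ j ∈ range n, ((j:ℝ)+1)*((j:ℝ)+2)*((j:ℝ)+3) = n*(n+1)*(n+2)*(n+3)/4 := by
  induction n with
  | zero => simp
  | succ n ih => rw [sum_range_succ, ih]; push_cast; ring

lemma IA (m : ℕ) : ∑ p ∈ antidiagonal m, ((p.1:ℝ)+1) = (m+1)*(m+2)/2 := by
  rw [Finset.Nat.sum_antidiagonal_eq_sum_range_succ_mk]
  have := L0 (m+1)
  push_cast at this ⊢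
  rw [this]; ring

lemma IB (n : ℕ) : ∑ p ∈ antidiagonal n, ((p.1:ℝ)+1)*(((p.2:ℝ)+1)*((p.2:ℝ)+2)/2)
    = (n+1)*(n+2)*(n+3)*(n+4)/24 := by
  rw [Finset.Nat.sum_antidiagonal_eq_sum_range_succ_mk, ← Finset.sum_range_reflect]
  have h1 : ∑ j ∈ range (n+1),
      (((n + 1 - 1 - j : ℕ):ℝ)+1)*((((n - (n + 1 - 1 - j) : ℕ):ℝ)+1)*(((( n - (n + 1 - 1 - j) : ℕ)):ℝ)+2)/2)
        = ∑ j ∈ range (n+1),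
        (((n:ℝ)+4)/2*(((j:ℝ)+1)*((j:ℝ)+2)) - (1/2)*(((j:ℝ)+1)*((j:ℝ)+2)*((j:ℝ)+3))) := by
    refine Finset.sum_congr rfl fun j hj => ?_
    simp only [mem_range] at hj
    have hj' : j ≤ n := Nat.lt_succ_iff.mp hj
    simp only [Nat.add_sub_cancel]
    rw [Nat.sub_sub_self hj', Nat.cast_sub hj']
    ring
  rw [h1, Finset.sum_sub_distrib, ← Finset.mul_sum, ← Finset.mul_sum, L1 (n+1), L2 (n+1)]
  push_cast
  ring

lemma sum_inv_fact : Summable (fun n : ℕ => (1:ℝ) / (Nat.factorial n)) := by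
  simpa using Real.summable_pow_div_factorial 1

lemma norm_inv_fact : Summable (fun n : ℕ => ‖(1:ℝ) / (Nat.factorial n)‖) := by
  refine sum_inv_fact.congr fun n => ?_
  rw [Real.norm_eq_abs, abs_of_nonneg (by positivity)]

lemma sum_inv_fact_succ : Summable (fun n : ℕ => (1:ℝ) / (Nat.factorial (n+1))) :=
  (summable_nat_add_iff 1).mpr sum_inv_fact

lemma norm_inv_fact_succ : Summable (fun n : ℕ => ‖(1:ℝ) / (Nat.factorial (n+1))‖) := by
  refine sum_inv_fact_succ.congr fun n => ?_
  rw [Real.norm_eq_abs, abs_of_nonneg (by positivity)]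

lemma fact_mul_le (a b : ℕ) : (Nat.factorial a) * (Nat.factorial b) ≤ Nat.factorial (a+b) :=
  Nat.le_of_dvd (Nat.factorial_pos _) (Nat.factorial_mul_factorial_dvd_factorial_add a b)

lemma exp_one_eq : Real.exp 1 = ∑' n : ℕ, (1:ℝ) / (Nat.factorial n) := by
  rw [Real.exp_eq_exp_ℝ, NormedSpace.exp_eq_tsum_div]
  norm_num

/-- Summing over ℕ×ℕ equals summing antidiagonals. -/
lemma tsum_antidiag (f : ℕ × ℕ → ℝ) (hf : Summable f) :
    ∑' p : ℕ × ℕ, f p = ∑' n : ℕ, ∑ p ∈ antidiagonal n, f p := by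
  rw [← Finset.HasAntidiagonal.sigmaAntidiagonalEquivProd.tsum_eq f]
  refine (Summable.tsum_sigma ?_).trans (tsum_congr fun n => ?_)
  · exact Finset.HasAntidiagonal.sigmaAntidiagonalEquivProd.summable_iff.mpr hf
  · exact Finset.tsum_subtype _ _

/-- The triple-sum function on ℕ³. -/
noncomputable def ff : ℕ × ℕ × ℕ → ℝ :=
  fun p => (((p.1:ℝ)+1) * ((p.2.1:ℝ)+1)) / (Nat.factorial (p.1+p.2.1+p.2.2+3))

/-- The pair function after summing the innermost antidiagonals. -/
noncomputable def hh : ℕ × ℕ → ℝ :=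
  fun q => (((q.1:ℝ)+1) * (((q.2:ℝ)+1)*((q.2:ℝ)+2)/2)) / (Nat.factorial (q.1+q.2+3))

lemma sum_hh : Summable hh := by
  have hb : Summable (fun q : ℕ × ℕ => ((1:ℝ)/Nat.factorial q.1) * ((1:ℝ)/Nat.factorial q.2)) :=
    summable_mul_of_summable_norm norm_inv_fact norm_inv_fact
  refine Summable.of_nonneg_of_le (fun q => by simp only [hh]; positivity) (fun q => ?_) hb
  obtain ⟨a, m⟩ := q
  simp only [hh]
  have hd : (Nat.factorial (a+1)) * (Nat.factorial (m+2)) ≤ Nat.factorial (a+m+3) := by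
    have := fact_mul_le (a+1) (m+2)
    simpa [show a+1+(m+2) = a+m+3 by omega] using this
  have h1 : (((a:ℝ)+1) * (((m:ℝ)+1)*((m:ℝ)+2)/2)) / (Nat.factorial (a+m+3))
      ≤ (((a:ℝ)+1) * (((m:ℝ)+1)*((m:ℝ)+2)/2)) / ((Nat.factorial (a+1)) * (Nat.factorial (m+2))) := by
    apply div_le_div_of_nonneg_left (by positivity) (by positivity)
    exact_mod_cast hd
  have heq : (((a:ℝ)+1) * (((m:ℝ)+1)*((m:ℝ)+2)/2)) / ((Nat.factorial (a+1)) * (Nat.factorial (m+2)))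
      = (1/2) * (((1:ℝ)/Nat.factorial a) * ((1:ℝ)/Nat.factorial m)) := by
    rw [Nat.factorial_succ a, Nat.factorial_succ (m+1), Nat.factorial_succ m]
    have ha : (Nat.factorial a : ℝ) ≠ 0 := by positivity
    have hm : (Nat.factorial m : ℝ) ≠ 0 := by positivity
    push_cast
    field_simp
    ring
  have hnn : (0:ℝ) ≤ ((1:ℝ)/Nat.factorial a) * ((1:ℝ)/Nat.factorial m) := by positivity
  refine h1.trans ?_
  rw [heq]
  linarith

lemma sum_ff : Summable ff := by
  have hbc : Summable (fun q : ℕ × ℕ => ((1:ℝ)/Nat.factorial q.1) * ((1:ℝ)/Nat.factorial (q.2+1))) :=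
    summable_mul_of_summable_norm norm_inv_fact norm_inv_fact_succ
  have hbcn : Summable (fun q : ℕ × ℕ =>
      ‖((1:ℝ)/Nat.factorial q.1) * ((1:ℝ)/Nat.factorial (q.2+1))‖) := by
    refine hbc.congr fun q => ?_
    rw [Real.norm_eq_abs, abs_of_nonneg (by positivity)]
  have hb : Summable (fun p : ℕ × ℕ × ℕ =>
      ((1:ℝ)/Nat.factorial p.1) * (((1:ℝ)/Nat.factorial p.2.1) * ((1:ℝ)/Nat.factorial (p.2.2+1)))) :=
    summable_mul_of_summable_norm norm_inv_fact hbcn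
  refine Summable.of_nonneg_of_le (fun p => by simp only [ff]; positivity) (fun p => ?_) hb
  obtain ⟨a, b, c⟩ := p
  simp only [ff]
  have hd : (Nat.factorial (a+1)) * ((Nat.factorial (b+1)) * (Nat.factorial (c+1)))
      ≤ Nat.factorial (a+b+c+3) := by
    calc (Nat.factorial (a+1)) * ((Nat.factorial (b+1)) * (Nat.factorial (c+1)))
        ≤ (Nat.factorial (a+1)) * (Nat.factorial (b+1+(c+1))) :=
          Nat.mul_le_mul_left _ (fact_mul_le (b+1) (c+1))
      _ ≤ Nat.factorial (a+1+(b+1+(c+1))) := fact_mul_le _ _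
      _ = Nat.factorial (a+b+c+3) := by ring_nf
  have h1 : (((a:ℝ)+1) * ((b:ℝ)+1)) / (Nat.factorial (a+b+c+3))
      ≤ (((a:ℝ)+1) * ((b:ℝ)+1)) /
        ((Nat.factorial (a+1)) * ((Nat.factorial (b+1)) * (Nat.factorial (c+1)))) := by
    apply div_le_div_of_nonneg_left (by positivity) (by positivity)
    exact_mod_cast hd
  refine h1.trans (le_of_eq ?_)
  rw [Nat.factorial_succ a, Nat.factorial_succ b]
  have ha : (Nat.factorial a : ℝ) ≠ 0 := by positivity
  have hbb : (Nat.factorial b : ℝ) ≠ 0 := by positivity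
  have hc : (Nat.factorial (c+1) : ℝ) ≠ 0 := by positivity
  push_cast
  field_simp

lemma sum_n_div_fact : Summable (fun n : ℕ => ((n:ℝ)) * ((1:ℝ)/Nat.factorial n)) := by
  rw [← summable_nat_add_iff 1]
  refine sum_inv_fact.congr fun n => ?_
  rw [Nat.factorial_succ]
  have ha : (Nat.factorial n : ℝ) ≠ 0 := by positivity
  push_cast
  field_simp

lemma tsum_n_div_fact : ∑' n : ℕ, ((n:ℝ)) * ((1:ℝ)/Nat.factorial n) = Real.exp 1 := by
  rw [Summable.tsum_eq_zero_add sum_n_div_fact]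
  have h0 : ((0:ℕ):ℝ) * ((1:ℝ)/Nat.factorial 0) = 0 := by simp
  rw [h0, zero_add, exp_one_eq]
  refine tsum_congr fun n => ?_
  rw [Nat.factorial_succ]
  have ha : (Nat.factorial n : ℝ) ≠ 0 := by positivity
  push_cast
  field_simp

end Stmt15Aux

open Stmt15Aux in
theorem stmt_15 :
    ∑' n₁ : ℕ+, ∑' n₂ : ℕ+, ∑' n₃ : ℕ+,
      ((n₁ : ℝ) * n₂) / (Nat.factorial (n₁ + n₂ + n₃ : ℕ)) = (5 / 24) * Real.exp 1 := by
  have e1 : ∀ g : ℕ+ → ℝ, ∑' n : ℕ+, g n = ∑' a : ℕ, g a.succPNat :=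
    fun g => (Equiv.pnatEquivNat.symm.tsum_eq g).symm
  have step1 : ∑' n₁ : ℕ+, ∑' n₂ : ℕ+, ∑' n₃ : ℕ+,
      ((n₁ : ℝ) * n₂) / (Nat.factorial (n₁ + n₂ + n₃ : ℕ))
      = ∑' a : ℕ, ∑' b : ℕ, ∑' c : ℕ, ff (a, b, c) := by
    rw [e1]
    refine tsum_congr fun a => ?_
    rw [e1]
    refine tsum_congr fun b => ?_
    rw [e1]
    refine tsum_congr fun c => ?_
    unfold ff
    have h : (a.succPNat + b.succPNat + c.succPNat : ℕ) = a+b+c+3 := by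
      simp [Nat.succPNat_coe]; omega
    rw [h]
    norm_cast
  rw [step1]
  have step2 : ∑' a : ℕ, ∑' b : ℕ, ∑' c : ℕ, ff (a, b, c) = ∑' p : ℕ × ℕ × ℕ, ff p := by
    rw [Summable.tsum_prod' sum_ff sum_ff.prod_factor]
    refine tsum_congr fun a => ?_
    exact (Summable.tsum_prod' (sum_ff.prod_factor a) ((sum_ff.prod_factor a).prod_factor)).symm
  rw [step2]
  have step3 : ∑' p : ℕ × ℕ × ℕ, ff p = ∑' q : ℕ × ℕ, hh q := by
    rw [Summable.tsum_prod' sum_ff sum_ff.prod_factor]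
    rw [Summable.tsum_prod' sum_hh sum_hh.prod_factor]
    refine tsum_congr fun a => ?_
    rw [tsum_antidiag _ (sum_ff.prod_factor a)]
    refine tsum_congr fun m => ?_
    have hfib : ∑ p ∈ antidiagonal m, ff (a, p)
        = (((a:ℝ)+1) / (Nat.factorial (a+m+3))) * ∑ p ∈ antidiagonal m, ((p.1:ℝ)+1) := by
      rw [Finset.mul_sum]
      refine Finset.sum_congr rfl fun p hp => ?_
      have hpm : p.1 + p.2 = m := Finset.HasAntidiagonal.mem_antidiagonal.mp hp
      unfold ff
      have : a + p.1 + p.2 + 3 = a + m + 3 := by omega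
      rw [this]
      ring
    rw [hfib, IA m]
    unfold hh
    ring
  rw [step3]
  have step4 : ∑' q : ℕ × ℕ, hh q
      = ∑' n : ℕ, (((n:ℝ)+1)*((n:ℝ)+2)*((n:ℝ)+3)*((n:ℝ)+4)/24) / (Nat.factorial (n+3)) := by
    rw [tsum_antidiag _ sum_hh]
    refine tsum_congr fun n => ?_
    have hfib : ∑ p ∈ antidiagonal n, hh p
        = (∑ p ∈ antidiagonal n, ((p.1:ℝ)+1)*(((p.2:ℝ)+1)*((p.2:ℝ)+2)/2)) / (Nat.factorial (n+3)) := by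
      rw [Finset.sum_div]
      refine Finset.sum_congr rfl fun p hp => ?_
      have hpn : p.1 + p.2 = n := Finset.HasAntidiagonal.mem_antidiagonal.mp hp
      unfold hh
      have : p.1 + p.2 + 3 = n + 3 := by omega
      rw [this]
    rw [hfib, IB n]
  rw [step4]
  have step5 : ∑' n : ℕ, (((n:ℝ)+1)*((n:ℝ)+2)*((n:ℝ)+3)*((n:ℝ)+4)/24) / (Nat.factorial (n+3))
      = ∑' n : ℕ, (1/24) * (((n:ℝ)) * ((1:ℝ)/Nat.factorial n) + 4 * ((1:ℝ)/Nat.factorial n)) := by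
    refine tsum_congr fun n => ?_
    rw [Nat.factorial_succ (n+2), Nat.factorial_succ (n+1), Nat.factorial_succ n]
    have ha : (Nat.factorial n : ℝ) ≠ 0 := by positivity
    push_cast
    field_simp
    ring
  rw [step5, tsum_mul_left, Summable.tsum_add sum_n_div_fact (sum_inv_fact.mul_left 4),
    tsum_n_div_fact, tsum_mul_left, ← exp_one_eq]
  ring
end

section
/- The quadruple series ∑_{n₁=1}^∞ ∑_{n₂=1}^∞ ∑_{n₃=1}^∞ ∑_{n₄=1}^∞ (n₁·n₂·n₃·n₄)/(n₁+n₂+n₃+n₄)! equals (179/2520)·e. -/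
open Finset Finset.Nat ENNReal


lemma hs (k : ℕ) : ∀ t : ℕ, ∑ a ∈ range (t+1), (a+k).choose k = (t+k+1).choose (k+1) := by
  intro t
  induction t with
  | zero => simp
  | succ t ih =>
    rw [Finset.sum_range_succ, ih]
    have : (t+1+k+1).choose (k+1) = (t+k+1).choose k + (t+k+1).choose (k+1) := by
      rw [show t+1+k+1 = (t+k+1)+1 by ring, Nat.choose_succ_succ']
    rw [this, show t+1+k = t+k+1 by ring]
    ring

lemma hsad (k t : ℕ) : ∑ p ∈ antidiagonal t, (p.1+k).choose k = (t+k+1).choose (k+1) := by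
  rw [Finset.Nat.sum_antidiagonal_eq_sum_range_succ_mk]
  exact hs k t

lemma hsad' (k t : ℕ) : ∑ p ∈ antidiagonal t, (p.2+k).choose k = (t+k+1).choose (k+1) := by
  have h := Finset.Nat.sum_antidiagonal_swap (n := t) (f := fun p : ℕ×ℕ => (p.1+k).choose k)
  simp only [Prod.fst_swap] at h
  rw [h]
  exact hsad k t

lemma Lconv (k : ℕ) : ∀ t : ℕ, ∑ p ∈ antidiagonal t, (p.1+1) * ((p.2+k).choose k)
    = (t+k+2).choose (k+2) := by
  intro t
  induction t with
  | zero => simp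
  | succ t ih =>
    rw [Finset.Nat.sum_antidiagonal_succ (f := fun p => (p.1+1) * ((p.2+k).choose k))]
    simp only [zero_add]
    have expand : ∑ p ∈ antidiagonal t, (p.1+1+1) * ((p.2+k).choose k)
        = (∑ p ∈ antidiagonal t, (p.1+1) * ((p.2+k).choose k))
          + ∑ p ∈ antidiagonal t, (p.2+k).choose k := by
      rw [← Finset.sum_add_distrib]
      exact Finset.sum_congr rfl fun p _ => by ring
    rw [expand, ih, hsad' k t]
    have p1 : (t+k+2).choose (k+1) = (t+k+1).choose k + (t+k+1).choose (k+1) := by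
      rw [show t+k+2 = (t+k+1)+1 by ring, Nat.choose_succ_succ']
    have p2 : (t+k+3).choose (k+2) = (t+k+2).choose (k+1) + (t+k+2).choose (k+2) := by
      rw [show t+k+3 = (t+k+2)+1 by ring, Nat.choose_succ_succ']
    rw [show t+1+k+2 = t+k+3 by ring, p2, p1, show t+1+k = t+k+1 by ring]
    ring


noncomputable def W0 : ℕ → ℝ≥0∞ := fun t => ((t.factorial : ℝ≥0∞))⁻¹

noncomputable def DD (c : ℕ → ℝ≥0∞) (m : ℕ) : ℝ≥0∞ := ∑' j : ℕ, c j * W0 (j + m)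

noncomputable def cnv (c : ℕ → ℝ≥0∞) : ℕ → ℝ≥0∞ :=
  fun t => ∑ p ∈ antidiagonal t, ((p.1 : ℝ≥0∞) + 1) * c p.2

lemma tsum_antidiag (f : ℕ × ℕ → ℝ≥0∞) :
    ∑' p : ℕ × ℕ, f p = ∑' t : ℕ, ∑ p ∈ antidiagonal t, f p := by
  rw [← Finset.HasAntidiagonal.sigmaAntidiagonalEquivProd.tsum_eq f, ENNReal.tsum_sigma']
  exact tsum_congr fun t => Finset.tsum_subtype _ _

lemma step (c : ℕ → ℝ≥0∞) (m : ℕ) :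
    ∑' i : ℕ, ((i : ℝ≥0∞) + 1) * DD c (i + m) = DD (cnv c) m := by
  simp only [DD, ← ENNReal.tsum_mul_left]
  rw [← ENNReal.tsum_prod' (f := fun p : ℕ × ℕ => ((p.1 : ℝ≥0∞)+1) * (c p.2 * W0 (p.2 + (p.1 + m)))),
    tsum_antidiag]
  refine tsum_congr fun t => ?_
  rw [cnv, Finset.sum_mul]
  refine Finset.sum_congr rfl fun p hp => ?_
  rw [Finset.HasAntidiagonal.mem_antidiagonal] at hp
  rw [show p.2 + (p.1 + m) = t + m by omega, mul_assoc]


lemma g0 (t : ℕ) : (t+7).factorial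
    = ((t+1)*(t+2)*(t+3)*(t+4)*(t+5)*(t+6)*(t+7)) * t.factorial := by
  rw [show t+7 = (t+6)+1 from rfl, Nat.factorial_succ,
      show t+6 = (t+5)+1 from rfl, Nat.factorial_succ,
      show t+5 = (t+4)+1 from rfl, Nat.factorial_succ,
      show t+4 = (t+3)+1 from rfl, Nat.factorial_succ,
      show t+3 = (t+2)+1 from rfl, Nat.factorial_succ,
      show t+2 = (t+1)+1 from rfl, Nat.factorial_succ,
      Nat.factorial_succ]
  ring

lemma g1 (t : ℕ) : (t+7).factorial
    = ((t+2)*(t+3)*(t+4)*(t+5)*(t+6)*(t+7)) * (t+1).factorial := by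
  rw [g0, Nat.factorial_succ]; ring

lemma g2 (t : ℕ) : (t+7).factorial
    = ((t+3)*(t+4)*(t+5)*(t+6)*(t+7)) * (t+2).factorial := by
  rw [g0, show t+2 = (t+1)+1 from rfl, Nat.factorial_succ, Nat.factorial_succ]; ring

lemma g3 (t : ℕ) : (t+7).factorial
    = ((t+4)*(t+5)*(t+6)*(t+7)) * (t+3).factorial := by
  rw [g0, show t+3 = (t+2)+1 from rfl, show t+2 = (t+1)+1 from rfl,
      Nat.factorial_succ, Nat.factorial_succ, Nat.factorial_succ]; ring

lemma f10_expand (t : ℕ) : (t+10).factorial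
    = ((t+4)*(t+5)*(t+6)*(t+7)*(t+8)*(t+9)*(t+10)) * (t+3).factorial := by
  rw [show t+10 = (t+9)+1 from rfl, Nat.factorial_succ,
      show t+9 = (t+8)+1 from rfl, Nat.factorial_succ,
      show t+8 = (t+7)+1 from rfl, Nat.factorial_succ,
      show t+7 = (t+6)+1 from rfl, Nat.factorial_succ,
      show t+6 = (t+5)+1 from rfl, Nat.factorial_succ,
      show t+5 = (t+4)+1 from rfl, Nat.factorial_succ,
      Nat.factorial_succ]
  ring

lemma chooseN (t : ℕ) : (t+10).choose 7 * 5040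
    = (t+4)*(t+5)*(t+6)*(t+7)*(t+8)*(t+9)*(t+10) := by
  have h := Nat.choose_mul_factorial_mul_factorial (show 7 ≤ t+10 by omega)
  rw [show t+10-7 = t+3 by omega, show Nat.factorial 7 = 5040 by decide,
      f10_expand t] at h
  have h3 : 0 < (t+3).factorial := Nat.factorial_pos _
  exact Nat.eq_of_mul_eq_mul_right h3 h

lemma NID (t : ℕ) : (t+10).choose 7 * 5040
    = (t+1)*(t+2)*(t+3)*(t+4)*(t+5)*(t+6)*(t+7)
      + 21*((t+2)*(t+3)*(t+4)*(t+5)*(t+6)*(t+7))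
      + 126*((t+3)*(t+4)*(t+5)*(t+6)*(t+7))
      + 210*((t+4)*(t+5)*(t+6)*(t+7)) := by
  rw [chooseN]; ring

lemma hfne (m : ℕ) : ((m.factorial : ℝ)) ≠ 0 := Nat.cast_ne_zero.2 m.factorial_ne_zero

lemma Tpt (t : ℕ) : (((t+10).choose 7 : ℕ) : ℝ)/(t+7).factorial
    = (1/t.factorial + 21/(t+1).factorial + 126/(t+2).factorial + 210/(t+3).factorial)/5040 := by
  rw [div_eq_div_iff (hfne (t+7)) (by norm_num : (5040:ℝ) ≠ 0)]
  have e0 : (1:ℝ)/t.factorial * (t+7).factorial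
      = (t+1)*(t+2)*(t+3)*(t+4)*(t+5)*(t+6)*(t+7) := by
    rw [one_div_mul_eq_div,
      show ((t+7).factorial : ℝ)
        = ((t+1)*(t+2)*(t+3)*(t+4)*(t+5)*(t+6)*(t+7) : ℝ) * t.factorial by
          exact_mod_cast congrArg (Nat.cast (R := ℝ)) (g0 t),
      mul_div_cancel_right₀ _ (hfne t)]
  have e1 : (21:ℝ)/(t+1).factorial * (t+7).factorial
      = 21*((t+2)*(t+3)*(t+4)*(t+5)*(t+6)*(t+7)) := by
    rw [div_mul_eq_mul_div,
      show ((t+7).factorial : ℝ)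
        = ((t+2)*(t+3)*(t+4)*(t+5)*(t+6)*(t+7) : ℝ) * (t+1).factorial by
          exact_mod_cast congrArg (Nat.cast (R := ℝ)) (g1 t),
      ← mul_assoc, mul_div_cancel_right₀ _ (hfne (t+1))]
  have e2 : (126:ℝ)/(t+2).factorial * (t+7).factorial
      = 126*((t+3)*(t+4)*(t+5)*(t+6)*(t+7)) := by
    rw [div_mul_eq_mul_div,
      show ((t+7).factorial : ℝ)
        = ((t+3)*(t+4)*(t+5)*(t+6)*(t+7) : ℝ) * (t+2).factorial by
          exact_mod_cast congrArg (Nat.cast (R := ℝ)) (g2 t),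
      ← mul_assoc, mul_div_cancel_right₀ _ (hfne (t+2))]
  have e3 : (210:ℝ)/(t+3).factorial * (t+7).factorial
      = 210*((t+4)*(t+5)*(t+6)*(t+7)) := by
    rw [div_mul_eq_mul_div,
      show ((t+7).factorial : ℝ)
        = ((t+4)*(t+5)*(t+6)*(t+7) : ℝ) * (t+3).factorial by
          exact_mod_cast congrArg (Nat.cast (R := ℝ)) (g3 t),
      ← mul_assoc, mul_div_cancel_right₀ _ (hfne (t+3))]
  rw [add_mul, add_mul, add_mul, e0, e1, e2, e3]
  have := congrArg (Nat.cast (R := ℝ)) (NID t)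
  push_cast at this
  linarith [this]
noncomputable def T : ℕ → ℝ := fun t => (((t+7).choose 7 : ℕ) : ℝ)/(t+4).factorial

lemma sfac : Summable (fun n : ℕ => (1:ℝ)/n.factorial) := by
  simpa using Real.summable_pow_div_factorial 1

lemma ssh (m : ℕ) : Summable (fun n : ℕ => (1:ℝ)/(n+m).factorial) :=
  (summable_nat_add_iff m).2 sfac

lemma e1 : ∑' n : ℕ, (1:ℝ)/n.factorial = Real.exp 1 := by
  rw [Real.exp_eq_exp_ℝ, NormedSpace.exp_eq_tsum_div]
  norm_num

lemma tailm (m : ℕ) : ∑' n : ℕ, (1:ℝ)/(n+m).factorial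
    = Real.exp 1 - ∑ i ∈ range m, (1:ℝ)/i.factorial := by
  have h := Summable.sum_add_tsum_nat_add (f := fun n : ℕ => (1:ℝ)/n.factorial) m sfac
  rw [e1] at h
  linarith [h]

lemma Tsh (t : ℕ) : T (t+3) = (1/t.factorial + 21/(t+1).factorial + 126/(t+2).factorial
    + 210/(t+3).factorial)/5040 := by
  show (((t+3+7).choose 7 : ℕ) : ℝ)/(t+3+4).factorial = _
  rw [show t+3+7 = t+10 by ring, show t+3+4 = t+7 by ring]
  exact Tpt t

lemma TshF : (fun t : ℕ => T (t+3)) = fun t : ℕ =>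
    ((1:ℝ)/t.factorial)/5040 + (21*((1:ℝ)/(t+1).factorial))/5040
    + (126*((1:ℝ)/(t+2).factorial))/5040 + (210*((1:ℝ)/(t+3).factorial))/5040 := by
  funext t
  rw [Tsh t]
  ring

lemma sT3 : Summable (fun t : ℕ => T (t+3)) := by
  rw [TshF]
  exact (((sfac.div_const 5040).add (((ssh 1).mul_left 21).div_const 5040)).add
    (((ssh 2).mul_left 126).div_const 5040)).add (((ssh 3).mul_left 210).div_const 5040)

lemma sT : Summable T := (summable_nat_add_iff 3).1 sT3

lemma Rval : ∑' t : ℕ, T t = 179/2520 * Real.exp 1 := by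
  have h := Summable.sum_add_tsum_nat_add (f := T) 3 sT
  have hT3 : ∑' t : ℕ, T (t+3) = (358 * Real.exp 1 - 798)/5040 := by
    rw [TshF]
    rw [Summable.tsum_add (((sfac.div_const 5040).add (((ssh 1).mul_left 21).div_const 5040)).add
        (((ssh 2).mul_left 126).div_const 5040)) (((ssh 3).mul_left 210).div_const 5040),
      Summable.tsum_add ((sfac.div_const 5040).add (((ssh 1).mul_left 21).div_const 5040))
        (((ssh 2).mul_left 126).div_const 5040),
      Summable.tsum_add (sfac.div_const 5040) (((ssh 1).mul_left 21).div_const 5040)]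
    rw [tsum_div_const, tsum_div_const, tsum_div_const, tsum_div_const,
      tsum_mul_left, tsum_mul_left, tsum_mul_left, e1, tailm 1, tailm 2, tailm 3]
    norm_num [Finset.sum_range_succ, Nat.factorial]
    ring
  have hpart : ∑ i ∈ range 3, T i = 19/120 := by
    have c0 : (7).choose 7 = 1 := by decide
    have c1 : (8).choose 7 = 8 := by decide
    have c2 : (9).choose 7 = 36 := by decide
    simp only [T, Finset.sum_range_succ, Finset.sum_range_zero]
    norm_num [c0, c1, c2, Nat.factorial]
  rw [← h, hpart, hT3]
  ring
noncomputable def c1E : ℕ → ℝ≥0∞ := fun j => (j : ℝ≥0∞) + 1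

lemma cnv_cast (k : ℕ) :
    cnv (fun j => (((j+k).choose k : ℕ) : ℝ≥0∞))
      = fun t => (((t+k+2).choose (k+2) : ℕ) : ℝ≥0∞) := by
  funext t
  rw [cnv, ← Lconv k t, Nat.cast_sum]
  exact Finset.sum_congr rfl fun p _ => by push_cast; ring

lemma c1E_eq : c1E = fun j => (((j+1).choose 1 : ℕ) : ℝ≥0∞) := by
  funext j
  rw [Nat.choose_one_right, c1E]
  push_cast
  rfl

lemma shift_fun (a b : ℕ) (h : ∀ t : ℕ, t + a = t + b) :
    (fun t : ℕ => (((t+a).choose a : ℕ) : ℝ≥0∞)) = fun t => (((t+b).choose a : ℕ) : ℝ≥0∞) := by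
  funext t; rw [h t]

lemma c4_eq : cnv (cnv (cnv c1E)) = fun t => (((t+7).choose 7 : ℕ) : ℝ≥0∞) := by
  rw [c1E_eq, cnv_cast 1]
  rw [show (fun t : ℕ => (((t+1+2).choose 3 : ℕ) : ℝ≥0∞))
      = fun t => (((t+3).choose 3 : ℕ) : ℝ≥0∞) from funext fun t => by norm_num]
  rw [cnv_cast 3]
  rw [show (fun t : ℕ => (((t+3+2).choose 5 : ℕ) : ℝ≥0∞))
      = fun t => (((t+5).choose 5 : ℕ) : ℝ≥0∞) from funext fun t => by norm_num]
  rw [cnv_cast 5]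

lemma hterm (i₁ i₂ i₃ i₄ : ℕ) :
    (((i₁+1)*(i₂+1)*(i₃+1)*(i₄+1) : ℕ) : ℝ≥0∞) * W0 ((i₁+1)+(i₂+1)+(i₃+1)+(i₄+1))
      = ((i₁:ℝ≥0∞)+1) * (((i₂:ℝ≥0∞)+1) * (((i₃:ℝ≥0∞)+1)
          * (c1E i₄ * W0 (i₄+(i₃+(i₂+(i₁+4))))))) := by
  rw [show (i₁+1)+(i₂+1)+(i₃+1)+(i₄+1) = i₄+(i₃+(i₂+(i₁+4))) by omega, c1E]
  push_cast
  ring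

lemma h4E (i₁ i₂ i₃ : ℕ) :
    ∑' i₄ : ℕ, (((i₁+1)*(i₂+1)*(i₃+1)*(i₄+1) : ℕ) : ℝ≥0∞)
        * W0 ((i₁+1)+(i₂+1)+(i₃+1)+(i₄+1))
      = ((i₁:ℝ≥0∞)+1) * (((i₂:ℝ≥0∞)+1) * (((i₃:ℝ≥0∞)+1)
          * DD c1E (i₃+(i₂+(i₁+4))))) := by
  rw [tsum_congr (fun i₄ => hterm i₁ i₂ i₃ i₄), ENNReal.tsum_mul_left,
    ENNReal.tsum_mul_left, ENNReal.tsum_mul_left]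
  rfl

lemma h3E (i₁ i₂ : ℕ) :
    ∑' i₃ : ℕ, ∑' i₄ : ℕ, (((i₁+1)*(i₂+1)*(i₃+1)*(i₄+1) : ℕ) : ℝ≥0∞)
        * W0 ((i₁+1)+(i₂+1)+(i₃+1)+(i₄+1))
      = ((i₁:ℝ≥0∞)+1) * (((i₂:ℝ≥0∞)+1) * DD (cnv c1E) (i₂+(i₁+4))) := by
  rw [tsum_congr (fun i₃ => h4E i₁ i₂ i₃), ENNReal.tsum_mul_left, ENNReal.tsum_mul_left,
    step c1E (i₂+(i₁+4))]

lemma h2E (i₁ : ℕ) :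
    ∑' i₂ : ℕ, ∑' i₃ : ℕ, ∑' i₄ : ℕ, (((i₁+1)*(i₂+1)*(i₃+1)*(i₄+1) : ℕ) : ℝ≥0∞)
        * W0 ((i₁+1)+(i₂+1)+(i₃+1)+(i₄+1))
      = ((i₁:ℝ≥0∞)+1) * DD (cnv (cnv c1E)) (i₁+4) := by
  rw [tsum_congr (fun i₂ => h3E i₁ i₂), ENNReal.tsum_mul_left, step (cnv c1E) (i₁+4)]

lemma ENNmain :
    ∑' i₁ : ℕ, ∑' i₂ : ℕ, ∑' i₃ : ℕ, ∑' i₄ : ℕ,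
        (((i₁+1)*(i₂+1)*(i₃+1)*(i₄+1) : ℕ) : ℝ≥0∞) * W0 ((i₁+1)+(i₂+1)+(i₃+1)+(i₄+1))
      = ∑' t : ℕ, (((t+7).choose 7 : ℕ) : ℝ≥0∞) * W0 (t+4) := by
  rw [tsum_congr (fun i₁ => h2E i₁), step (cnv (cnv c1E)) 4, c4_eq]
  rfl

lemma hOf : ∑' t : ℕ, (((t+7).choose 7 : ℕ) : ℝ≥0∞) * W0 (t+4)
    = ENNReal.ofReal (179/2520 * Real.exp 1) := by
  rw [← Rval, ENNReal.ofReal_tsum_of_nonneg (f := T) (fun t => div_nonneg (Nat.cast_nonneg _) (Nat.cast_nonneg _)) sT]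
  refine tsum_congr fun t => ?_
  show (((t+7).choose 7 : ℕ) : ℝ≥0∞) * W0 (t+4)
    = ENNReal.ofReal ((((t+7).choose 7 : ℕ) : ℝ)/(t+4).factorial)
  rw [ENNReal.ofReal_div_of_pos (by exact_mod_cast Nat.factorial_pos _ : (0:ℝ) < ((t+4).factorial : ℝ))]
  rw [ENNReal.ofReal_natCast]
  rw [show ((((t+4).factorial : ℕ) : ℝ)) = (((t+4).factorial : ℕ) : ℝ) from rfl,
    ENNReal.ofReal_natCast, W0, div_eq_mul_inv]

noncomputable def FE : ℕ+ → ℕ+ → ℕ+ → ℕ+ → ℝ≥0∞ := fun a b c d =>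
  ((((a:ℕ))*b*c*d : ℕ) : ℝ≥0∞) * W0 ((a:ℕ)+b+c+d)

lemma pe (g : ℕ+ → ℝ≥0∞) : ∑' a : ℕ+, g a = ∑' i : ℕ, g (i.succPNat) := by
  rw [← Equiv.pnatEquivNat.symm.tsum_eq g]
  exact tsum_congr fun i => by rw [Equiv.pnatEquivNat_symm_apply]

lemma SENN_eq : ∑' a : ℕ+, ∑' b : ℕ+, ∑' c : ℕ+, ∑' d : ℕ+, FE a b c d
    = ENNReal.ofReal (179/2520 * Real.exp 1) := by
  calc ∑' a : ℕ+, ∑' b : ℕ+, ∑' c : ℕ+, ∑' d : ℕ+, FE a b c d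
      = ∑' i₁ : ℕ, ∑' b : ℕ+, ∑' c : ℕ+, ∑' d : ℕ+, FE i₁.succPNat b c d := pe _
    _ = ∑' i₁ : ℕ, ∑' i₂ : ℕ, ∑' c : ℕ+, ∑' d : ℕ+, FE i₁.succPNat i₂.succPNat c d :=
        tsum_congr fun i₁ => pe _
    _ = ∑' i₁ : ℕ, ∑' i₂ : ℕ, ∑' i₃ : ℕ, ∑' d : ℕ+,
          FE i₁.succPNat i₂.succPNat i₃.succPNat d :=
        tsum_congr fun i₁ => tsum_congr fun i₂ => pe _
    _ = ∑' i₁ : ℕ, ∑' i₂ : ℕ, ∑' i₃ : ℕ, ∑' i₄ : ℕ,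
          FE i₁.succPNat i₂.succPNat i₃.succPNat i₄.succPNat :=
        tsum_congr fun i₁ => tsum_congr fun i₂ => tsum_congr fun i₃ => pe _
    _ = ∑' i₁ : ℕ, ∑' i₂ : ℕ, ∑' i₃ : ℕ, ∑' i₄ : ℕ,
          (((i₁+1)*(i₂+1)*(i₃+1)*(i₄+1) : ℕ) : ℝ≥0∞) * W0 ((i₁+1)+(i₂+1)+(i₃+1)+(i₄+1)) :=
        tsum_congr fun i₁ => tsum_congr fun i₂ => tsum_congr fun i₃ =>
          tsum_congr fun i₄ => rfl
    _ = ∑' t : ℕ, (((t+7).choose 7 : ℕ) : ℝ≥0∞) * W0 (t+4) := ENNmain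
    _ = ENNReal.ofReal (179/2520 * Real.exp 1) := hOf

lemma FE_ne_top (a b c d : ℕ+) : FE a b c d ≠ ⊤ := by
  refine ENNReal.mul_ne_top (ENNReal.natCast_ne_top _) ?_
  rw [W0]
  exact ENNReal.inv_ne_top.2 (by exact_mod_cast Nat.factorial_ne_zero _)

lemma SENN_ne_top : ∑' a : ℕ+, ∑' b : ℕ+, ∑' c : ℕ+, ∑' d : ℕ+, FE a b c d ≠ ⊤ := by
  rw [SENN_eq]; exact ENNReal.ofReal_ne_top

lemma hb_ne (a : ℕ+) : ∑' b : ℕ+, ∑' c : ℕ+, ∑' d : ℕ+, FE a b c d ≠ ⊤ :=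
  ne_top_of_le_ne_top SENN_ne_top
    (ENNReal.le_tsum (f := fun a => ∑' b : ℕ+, ∑' c : ℕ+, ∑' d : ℕ+, FE a b c d) a)

lemma hc_ne (a b : ℕ+) : ∑' c : ℕ+, ∑' d : ℕ+, FE a b c d ≠ ⊤ :=
  ne_top_of_le_ne_top (hb_ne a)
    (ENNReal.le_tsum (f := fun b => ∑' c : ℕ+, ∑' d : ℕ+, FE a b c d) b)

lemma hd_ne (a b c : ℕ+) : ∑' d : ℕ+, FE a b c d ≠ ⊤ :=
  ne_top_of_le_ne_top (hc_ne a b) (ENNReal.le_tsum (f := fun c => ∑' d : ℕ+, FE a b c d) c)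

lemma tR (a b c d : ℕ+) :
    ((a : ℝ) * b * c * d) / (Nat.factorial (a + b + c + d : ℕ)) = (FE a b c d).toReal := by
  rw [FE, ENNReal.toReal_mul, W0, ENNReal.toReal_inv, ENNReal.toReal_natCast,
    ENNReal.toReal_natCast, ← div_eq_mul_inv]
  push_cast
  ring

theorem stmt_16 :
    ∑' n₁ : ℕ+, ∑' n₂ : ℕ+, ∑' n₃ : ℕ+, ∑' n₄ : ℕ+,
      ((n₁ : ℝ) * n₂ * n₃ * n₄) / (Nat.factorial (n₁ + n₂ + n₃ + n₄ : ℕ))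
      = (179 / 2520) * Real.exp 1 := by
  have l4 : ∀ a b c : ℕ+,
      (∑' d : ℕ+, ((a : ℝ) * b * c * d) / (Nat.factorial (a + b + c + d : ℕ)))
        = (∑' d : ℕ+, FE a b c d).toReal := by
    intro a b c
    rw [ENNReal.tsum_toReal_eq (fun d => FE_ne_top a b c d)]
    exact tsum_congr fun d => tR a b c d
  have l3 : ∀ a b : ℕ+,
      (∑' c : ℕ+, (∑' d : ℕ+, FE a b c d).toReal)
        = (∑' c : ℕ+, ∑' d : ℕ+, FE a b c d).toReal := by
    intro a b
    rw [ENNReal.tsum_toReal_eq (fun c => hd_ne a b c)]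
  have l2 : ∀ a : ℕ+,
      (∑' b : ℕ+, (∑' c : ℕ+, ∑' d : ℕ+, FE a b c d).toReal)
        = (∑' b : ℕ+, ∑' c : ℕ+, ∑' d : ℕ+, FE a b c d).toReal := by
    intro a
    rw [ENNReal.tsum_toReal_eq (fun b => hc_ne a b)]
  have l1 : (∑' a : ℕ+, (∑' b : ℕ+, ∑' c : ℕ+, ∑' d : ℕ+, FE a b c d).toReal)
        = (∑' a : ℕ+, ∑' b : ℕ+, ∑' c : ℕ+, ∑' d : ℕ+, FE a b c d).toReal := by
    rw [ENNReal.tsum_toReal_eq (fun a => hb_ne a)]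
  calc ∑' n₁ : ℕ+, ∑' n₂ : ℕ+, ∑' n₃ : ℕ+, ∑' n₄ : ℕ+,
      ((n₁ : ℝ) * n₂ * n₃ * n₄) / (Nat.factorial (n₁ + n₂ + n₃ + n₄ : ℕ))
      = (∑' a : ℕ+, ∑' b : ℕ+, ∑' c : ℕ+, ∑' d : ℕ+, FE a b c d).toReal := by
        rw [← l1]
        refine tsum_congr fun a => ?_
        rw [← l2 a]
        refine tsum_congr fun b => ?_
        rw [← l3 a b]
        refine tsum_congr fun c => ?_
        exact l4 a b c
    _ = (ENNReal.ofReal (179/2520 * Real.exp 1)).toReal := by rw [SENN_eq]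
    _ = 179/2520 * Real.exp 1 := ENNReal.toReal_ofReal (by positivity)
end

section
/- The quintuple series ∑_{n₁=1}^∞ ⋯ ∑_{n₅=1}^∞ (n₁⋯n₅)/(n₁+⋯+n₅)! equals (787/51840)·e. -/
open Finset
open scoped ENNReal

namespace S17

lemma vand (k : ℕ) : ∀ (l n : ℕ),
    ∑ p ∈ antidiagonal n, p.1.choose k * p.2.choose l = (n + 1).choose (k + l + 1)
  | 0, n => by
    simp only [Nat.choose_zero_right, mul_one]
    rw [Finset.Nat.sum_antidiagonal_eq_sum_range_succ_mk, ← Nat.sum_Icc_choose]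
    refine (Finset.sum_subset ?_ ?_).symm
    · intro i hi; simp only [mem_Icc, mem_range] at hi ⊢; omega
    · intro i hi hni
      simp only [mem_Icc, mem_range] at hi hni
      exact Nat.choose_eq_zero_of_lt (by omega)
  | (l+1), 0 => by
    rw [Finset.Nat.antidiagonal_zero]
    simp [Nat.choose_eq_zero_of_lt]
  | (l+1), (n+1) => by
    rw [Finset.Nat.sum_antidiagonal_succ']
    have h1 : ∀ p : ℕ × ℕ, p.1.choose k * (p.2 + 1).choose (l+1)
        = p.1.choose k * p.2.choose l + p.1.choose k * p.2.choose (l+1) := by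
      intro p; rw [Nat.choose_succ_succ, mul_add]
    simp only [h1]
    rw [Finset.sum_add_distrib, vand k l n, vand k (l+1) n]
    have h0 : (n+1).choose k * (0 : ℕ).choose (l+1) = 0 := by simp
    rw [h0, zero_add]
    have : k + (l+1) + 1 = (k + l + 1) + 1 := by omega
    rw [this, Nat.choose_succ_succ (n+1) (k+l+1)]

lemma vand_shift : ∀ (m r : ℕ), m ≤ r → ∀ s : ℕ,
    ∑ p ∈ antidiagonal s, p.1.choose 1 * (p.2 + m).choose r = (s + m + 1).choose (r + 2)
  | 0, r, _, s => by
    have := vand 1 r s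
    simpa [show 1 + r + 1 = r + 2 by omega] using this
  | (m+1), r, h, s => by
    have key := Finset.Nat.sum_antidiagonal_succ'
      (f := fun p : ℕ × ℕ => p.1.choose 1 * (p.2 + m).choose r) (n := s)
    have h0 : (s+1).choose 1 * ((0:ℕ) + m).choose r = 0 := by
      simp [Nat.choose_eq_zero_of_lt (show m < r by omega)]
    rw [h0, zero_add] at key
    have h2 : ∀ p : ℕ × ℕ, p.1.choose 1 * (p.2 + 1 + m).choose r
        = p.1.choose 1 * (p.2 + (m+1)).choose r := by
      intro p; congr 2; omega
    simp only [h2] at key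
    rw [← key, vand_shift m r (by omega) (s+1)]
    congr 1; omega


noncomputable def Nest : ℕ → (ℕ → ℝ≥0∞) → ℝ≥0∞
  | 0, f => f 0
  | (k+1), f => ∑' n : ℕ+, ((n : ℕ) : ℝ≥0∞) * Nest k (fun t => f (n + t))

lemma tsum_pnat (f : ℕ → ℝ≥0∞) (h0 : f 0 = 0) : ∑' n : ℕ+, f n = ∑' n : ℕ, f n := by
  refine Function.Injective.tsum_eq (fun a b h => PNat.coe_injective h) ?_
  intro x hx
  rcases Nat.eq_zero_or_pos x with rfl | hpos
  · exact absurd h0 hx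
  · exact ⟨⟨x, hpos⟩, rfl⟩

lemma conv (w : ℕ → ℕ) (f : ℕ → ℝ≥0∞) :
    ∑' n : ℕ+, ((n : ℕ) : ℝ≥0∞) * ∑' t : ℕ, (w t : ℝ≥0∞) * f (n + t)
      = ∑' s : ℕ, ((∑ p ∈ antidiagonal s, p.1 * w p.2 : ℕ) : ℝ≥0∞) * f s := by
  rw [tsum_pnat (fun n => (n : ℝ≥0∞) * ∑' t : ℕ, (w t : ℝ≥0∞) * f (n + t)) (by simp)]
  have h1 : ∀ n : ℕ, ((n : ℝ≥0∞)) * ∑' t : ℕ, (w t : ℝ≥0∞) * f (n + t)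
      = ∑' t : ℕ, ((n * w t : ℕ) : ℝ≥0∞) * f (n + t) := by
    intro n
    rw [← ENNReal.tsum_mul_left]
    exact tsum_congr fun t => by push_cast; ring
  calc ∑' n : ℕ, ((n : ℝ≥0∞)) * ∑' t : ℕ, (w t : ℝ≥0∞) * f (n + t)
      = ∑' n : ℕ, ∑' t : ℕ, ((n * w t : ℕ) : ℝ≥0∞) * f (n + t) := tsum_congr h1
    _ = ∑' p : ℕ × ℕ, ((p.1 * w p.2 : ℕ) : ℝ≥0∞) * f (p.1 + p.2) :=
        (ENNReal.tsum_prod' (f := fun q : ℕ × ℕ => ((q.1 * w q.2 : ℕ) : ℝ≥0∞) * f (q.1 + q.2))).symm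
    _ = ∑' x : (Σ n : ℕ, antidiagonal n),
          ((((x.2 : ℕ × ℕ)).1 * w ((x.2 : ℕ × ℕ)).2 : ℕ) : ℝ≥0∞) * f (((x.2 : ℕ × ℕ)).1 + ((x.2 : ℕ × ℕ)).2) := by
        rw [← Finset.HasAntidiagonal.sigmaAntidiagonalEquivProd.tsum_eq
          (fun p : ℕ × ℕ => ((p.1 * w p.2 : ℕ) : ℝ≥0∞) * f (p.1 + p.2))]
        rfl
    _ = ∑' s : ℕ, ∑' p : (antidiagonal s : Finset (ℕ × ℕ)),
          (((p : ℕ × ℕ).1 * w (p : ℕ × ℕ).2 : ℕ) : ℝ≥0∞) * f ((p : ℕ × ℕ).1 + (p : ℕ × ℕ).2) :=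
        ENNReal.tsum_sigma' _
    _ = ∑' s : ℕ, ∑ p ∈ antidiagonal s, ((p.1 * w p.2 : ℕ) : ℝ≥0∞) * f (p.1 + p.2) := by
        refine tsum_congr fun s => ?_
        exact Finset.tsum_subtype (antidiagonal s) (fun p => ((p.1 * w p.2 : ℕ) : ℝ≥0∞) * f (p.1 + p.2))
    _ = ∑' s : ℕ, ((∑ p ∈ antidiagonal s, p.1 * w p.2 : ℕ) : ℝ≥0∞) * f s := by
        refine tsum_congr fun s => ?_
        rw [Nat.cast_sum, Finset.sum_mul]
        refine Finset.sum_congr rfl fun p hp => ?_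
        rw [mem_antidiagonal.mp hp]

lemma nest_eq (k : ℕ) : ∀ f : ℕ → ℝ≥0∞,
    Nest (k+1) f = ∑' t : ℕ, (((t + k).choose (2*k+1) : ℕ) : ℝ≥0∞) * f t := by
  induction k with
  | zero =>
    intro f
    show ∑' n : ℕ+, ((n : ℕ) : ℝ≥0∞) * (fun t => f ((n:ℕ) + t)) 0 = _
    simp only [add_zero]
    rw [tsum_pnat (fun n => ((n : ℝ≥0∞)) * f n) (by simp)]
    exact tsum_congr fun t => by norm_num
  | succ k ih =>
    intro f
    show ∑' n : ℕ+, ((n : ℕ) : ℝ≥0∞) * Nest (k+1) (fun t => f ((n:ℕ) + t)) = _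
    have h1 : ∀ n : ℕ+, Nest (k+1) (fun t => f ((n:ℕ) + t))
        = ∑' t : ℕ, (((t + k).choose (2*k+1) : ℕ) : ℝ≥0∞) * f ((n:ℕ) + t) := fun n => ih _
    simp only [h1]
    rw [conv (fun t => (t + k).choose (2*k+1)) f]
    refine tsum_congr fun s => ?_
    congr 2
    have h2 : ∀ p : ℕ × ℕ, p.1 * (p.2 + k).choose (2*k+1)
        = p.1.choose 1 * (p.2 + k).choose (2*k+1) := fun p => by rw [Nat.choose_one_right]
    simp only [h2]
    rw [vand_shift k (2*k+1) (by omega) s]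
    congr 1


lemma exp_ofReal (x : ℝ) (hx : 0 ≤ x) :
    ∑' t : ℕ, (ENNReal.ofReal x) ^ t * ((t.factorial : ℝ≥0∞))⁻¹ = ENNReal.ofReal (Real.exp x) := by
  have hsum : Summable (fun t : ℕ => x ^ t / t.factorial) := Real.summable_pow_div_factorial x
  have hexp : Real.exp x = ∑' t : ℕ, x ^ t / t.factorial := by
    rw [Real.exp_eq_exp_ℝ, NormedSpace.exp_eq_tsum_div]
  rw [hexp, ENNReal.ofReal_tsum_of_nonneg (fun t => by positivity) hsum]
  refine tsum_congr fun t => ?_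
  have hfac : (0:ℝ) < t.factorial := by positivity
  rw [div_eq_mul_inv, ENNReal.ofReal_mul (by positivity), ENNReal.ofReal_pow hx,
    ENNReal.ofReal_inv_of_pos hfac, ENNReal.ofReal_natCast]

lemma S_eq : ∑' t : ℕ, ((t.factorial : ℝ≥0∞))⁻¹ = ENNReal.ofReal (Real.exp 1) := by
  have := exp_ofReal 1 zero_le_one
  simpa using this

lemma choose_le_two_pow (n r : ℕ) : n.choose r ≤ 2 ^ n := by
  rcases le_or_gt r n with h | h
  · calc n.choose r ≤ ∑ i ∈ range (n+1), n.choose i :=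
        Finset.single_le_sum (fun i _ => Nat.zero_le _) (by simp [Nat.lt_succ, h])
      _ = 2 ^ n := Nat.sum_range_choose n
  · simp [Nat.choose_eq_zero_of_lt h]

lemma tsum_choose_fact (i : ℕ) :
    ∑' t : ℕ, ((t.choose i : ℕ) : ℝ≥0∞) * ((t.factorial : ℝ≥0∞))⁻¹
      = ((i.factorial : ℝ≥0∞))⁻¹ * ∑' m : ℕ, ((m.factorial : ℝ≥0∞))⁻¹ := by
  rw [← ENNReal.tsum_mul_left]
  have hinj : Function.Injective (fun m : ℕ => m + i) := add_left_injective i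
  have hsupp : Function.support (fun t : ℕ => ((t.choose i : ℕ) : ℝ≥0∞) * ((t.factorial : ℝ≥0∞))⁻¹)
      ⊆ Set.range (fun m : ℕ => m + i) := by
    intro t ht
    rcases le_or_gt i t with h | h
    · exact ⟨t - i, by simp; omega⟩
    · exact absurd (by simp [Nat.choose_eq_zero_of_lt h]) ht
  rw [← Function.Injective.tsum_eq hinj hsupp]
  refine tsum_congr fun m => ?_
  have hkey : ((m + i).choose i * i.factorial * m.factorial : ℕ) = (m + i).factorial := by
    have := Nat.choose_mul_factorial_mul_factorial (Nat.le_add_left i m)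
    simpa [Nat.add_sub_cancel] using this
  have hcast : ((m + i).factorial : ℝ≥0∞)
      = ((m + i).choose i : ℝ≥0∞) * (i.factorial : ℝ≥0∞) * (m.factorial : ℝ≥0∞) := by
    rw [← hkey]; push_cast; ring
  have hC0 : ((m + i).choose i : ℝ≥0∞) ≠ 0 := by
    simp only [ne_eq, Nat.cast_eq_zero]
    exact Nat.choose_pos (Nat.le_add_left i m) |>.ne'
  have hCt : ((m + i).choose i : ℝ≥0∞) ≠ ⊤ := ENNReal.natCast_ne_top _
  have hi0 : ((i.factorial : ℝ≥0∞)) ≠ 0 := by simp [Nat.factorial_ne_zero]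
  have hit : ((i.factorial : ℝ≥0∞)) ≠ ⊤ := ENNReal.natCast_ne_top _
  have hm0 : ((m.factorial : ℝ≥0∞)) ≠ 0 := by simp [Nat.factorial_ne_zero]
  have hmt : ((m.factorial : ℝ≥0∞)) ≠ ⊤ := ENNReal.natCast_ne_top _
  rw [hcast, ENNReal.mul_inv (by tauto) (by tauto), ENNReal.mul_inv (by tauto) (by tauto)]
  rw [show ((m + i).choose i : ℝ≥0∞) * (((m+i).choose i : ℝ≥0∞)⁻¹ * (i.factorial : ℝ≥0∞)⁻¹ * (m.factorial : ℝ≥0∞)⁻¹)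
      = (((m+i).choose i : ℝ≥0∞) * ((m+i).choose i : ℝ≥0∞)⁻¹) * ((i.factorial : ℝ≥0∞)⁻¹ * (m.factorial : ℝ≥0∞)⁻¹) by ring]
  rw [ENNReal.mul_inv_cancel hC0 hCt, one_mul]

lemma choose_expand (t : ℕ) :
    (t + 4).choose 9 = t.choose 5 + 4 * t.choose 6 + 6 * t.choose 7 + 4 * t.choose 8 + t.choose 9 := by
  rw [Nat.add_choose_eq]
  rw [Finset.Nat.sum_antidiagonal_eq_sum_range_succ_mk]
  simp [Finset.sum_range_succ]
  norm_num [Nat.choose]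
  ring

lemma two_tsum_ne_top : ∑' t : ℕ, (2:ℝ≥0∞) ^ t * ((t.factorial : ℝ≥0∞))⁻¹ ≠ ⊤ := by
  have h := exp_ofReal 2 (by norm_num)
  rw [show ENNReal.ofReal (2:ℝ) = (2:ℝ≥0∞) by norm_num] at h
  rw [h]
  exact ENNReal.ofReal_ne_top

lemma nest_ne_top (k m : ℕ) (hk : k ≤ 9) :
    Nest (k+1) (fun t => (((m + t).factorial : ℝ≥0∞))⁻¹) ≠ ⊤ := by
  rw [nest_eq]
  have hb : ∀ t : ℕ, (((t+k).choose (2*k+1) : ℕ) : ℝ≥0∞) * (((m + t).factorial : ℝ≥0∞))⁻¹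
      ≤ (2:ℝ≥0∞)^9 * ((2:ℝ≥0∞) ^ t * ((t.factorial : ℝ≥0∞))⁻¹) := by
    intro t
    rw [← mul_assoc, ← pow_add]
    refine mul_le_mul' ?_ ?_
    · calc (((t+k).choose (2*k+1) : ℕ) : ℝ≥0∞) ≤ ((2^(t+k) : ℕ) : ℝ≥0∞) := by
            exact_mod_cast choose_le_two_pow (t+k) (2*k+1)
        _ ≤ (2:ℝ≥0∞)^(9+t) := by
            push_cast
            exact pow_le_pow_right₀ (by norm_num) (by omega)
    · exact ENNReal.inv_le_inv' (by exact_mod_cast Nat.factorial_le (Nat.le_add_left t m))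
  have hle : ∑' t : ℕ, (((t+k).choose (2*k+1) : ℕ) : ℝ≥0∞) * (((m + t).factorial : ℝ≥0∞))⁻¹
      ≤ (2:ℝ≥0∞)^9 * ∑' t : ℕ, (2:ℝ≥0∞) ^ t * ((t.factorial : ℝ≥0∞))⁻¹ := by
    calc _ ≤ ∑' t : ℕ, (2:ℝ≥0∞)^9 * ((2:ℝ≥0∞) ^ t * ((t.factorial : ℝ≥0∞))⁻¹) :=
          ENNReal.tsum_le_tsum hb
      _ = _ := ENNReal.tsum_mul_left
  exact ne_top_of_le_ne_top (ENNReal.mul_ne_top (by norm_num) two_tsum_ne_top) hle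

lemma nest5_value :
    Nest 5 (fun t => ((t.factorial : ℝ≥0∞))⁻¹)
      = ENNReal.ofReal ((787 / 51840) * Real.exp 1) := by
  have h9 : Nest 5 (fun t => ((t.factorial : ℝ≥0∞))⁻¹)
      = ∑' t : ℕ, (((t + 4).choose 9 : ℕ) : ℝ≥0∞) * ((t.factorial : ℝ≥0∞))⁻¹ := by
    have := nest_eq 4 (fun t => ((t.factorial : ℝ≥0∞))⁻¹)
    norm_num at this
    exact this
  rw [h9]
  have hexpand : ∀ t : ℕ, (((t + 4).choose 9 : ℕ) : ℝ≥0∞) * ((t.factorial : ℝ≥0∞))⁻¹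
      = ((t.choose 5 : ℕ) : ℝ≥0∞) * ((t.factorial : ℝ≥0∞))⁻¹
        + 4 * (((t.choose 6 : ℕ) : ℝ≥0∞) * ((t.factorial : ℝ≥0∞))⁻¹)
        + 6 * (((t.choose 7 : ℕ) : ℝ≥0∞) * ((t.factorial : ℝ≥0∞))⁻¹)
        + 4 * (((t.choose 8 : ℕ) : ℝ≥0∞) * ((t.factorial : ℝ≥0∞))⁻¹)
        + ((t.choose 9 : ℕ) : ℝ≥0∞) * ((t.factorial : ℝ≥0∞))⁻¹ := by
    intro t
    rw [choose_expand t]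
    push_cast
    ring
  simp only [hexpand]
  rw [ENNReal.tsum_add, ENNReal.tsum_add, ENNReal.tsum_add, ENNReal.tsum_add,
    ENNReal.tsum_mul_left, ENNReal.tsum_mul_left, ENNReal.tsum_mul_left,
    tsum_choose_fact 5, tsum_choose_fact 6, tsum_choose_fact 7, tsum_choose_fact 8,
    tsum_choose_fact 9, S_eq]
  have hterm : ∀ i : ℕ, ((i.factorial : ℝ≥0∞))⁻¹ * ENNReal.ofReal (Real.exp 1)
      = ENNReal.ofReal ((i.factorial : ℝ)⁻¹ * Real.exp 1) := by
    intro i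
    rw [ENNReal.ofReal_mul (by positivity), ENNReal.ofReal_inv_of_pos (by positivity),
      ENNReal.ofReal_natCast]
  simp only [hterm]
  have h4 : (4 : ℝ≥0∞) = ENNReal.ofReal (4:ℝ) := by norm_num
  have h6 : (6 : ℝ≥0∞) = ENNReal.ofReal (6:ℝ) := by norm_num
  rw [h4, h6, ← ENNReal.ofReal_mul (by norm_num), ← ENNReal.ofReal_mul (by norm_num),
    ← ENNReal.ofReal_mul (by norm_num)]
  rw [← ENNReal.ofReal_add (by positivity) (by positivity),
    ← ENNReal.ofReal_add (by positivity) (by positivity),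
    ← ENNReal.ofReal_add (by positivity) (by positivity),
    ← ENNReal.ofReal_add (by positivity) (by positivity)]
  congr 1
  have e1 : ((Nat.factorial 5 : ℝ)) = 120 := by norm_num [Nat.factorial]
  have e2 : ((Nat.factorial 6 : ℝ)) = 720 := by norm_num [Nat.factorial]
  have e3 : ((Nat.factorial 7 : ℝ)) = 5040 := by norm_num [Nat.factorial]
  have e4 : ((Nat.factorial 8 : ℝ)) = 40320 := by norm_num [Nat.factorial]
  have e5 : ((Nat.factorial 9 : ℝ)) = 362880 := by norm_num [Nat.factorial]
  rw [e1, e2, e3, e4, e5]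
  ring

lemma nest_fin : ∀ k : ℕ, k ≤ 10 → ∀ m : ℕ,
    Nest k (fun t => (((m + t).factorial : ℝ≥0∞))⁻¹) ≠ ⊤
  | 0, _, m => by
    show (((m + 0).factorial : ℝ≥0∞))⁻¹ ≠ ⊤
    simp [Nat.factorial_ne_zero]
  | (k+1), hk, m => nest_ne_top k m (by omega)

lemma peel (g : ℕ+ → ℝ≥0∞) (h : ∀ n, g n ≠ ⊤) :
    (∑' n : ℕ+, ((n : ℕ) : ℝ≥0∞) * g n).toReal = ∑' n : ℕ+, ((n : ℕ) : ℝ) * (g n).toReal := by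
  rw [ENNReal.tsum_toReal_eq (fun n => ENNReal.mul_ne_top (ENNReal.natCast_ne_top _) (h n))]
  exact tsum_congr fun n => by rw [ENNReal.toReal_mul, ENNReal.toReal_natCast]

lemma peel_nest (k m : ℕ) (hk : k ≤ 9) :
    (Nest (k+1) (fun t => (((m + t).factorial : ℝ≥0∞))⁻¹)).toReal
      = ∑' n : ℕ+, ((n : ℕ) : ℝ)
          * (Nest k (fun t => (((m + (n : ℕ) + t).factorial : ℝ≥0∞))⁻¹)).toReal := by
  show (∑' n : ℕ+, ((n : ℕ) : ℝ≥0∞)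
      * Nest k (fun t => (((m + ((n : ℕ) + t)).factorial : ℝ≥0∞))⁻¹)).toReal = _
  have hfun : ∀ n : ℕ+, (fun t => (((m + ((n : ℕ) + t)).factorial : ℝ≥0∞))⁻¹)
      = (fun t => (((m + (n : ℕ) + t).factorial : ℝ≥0∞))⁻¹) := by
    intro n; funext t; rw [add_assoc]
  simp only [hfun]
  exact peel _ (fun n => nest_fin k (by omega) (m + (n : ℕ)))

end S17

open S17 in
theorem stmt_17 :
    ∑' n₁ : ℕ+, ∑' n₂ : ℕ+, ∑' n₃ : ℕ+, ∑' n₄ : ℕ+, ∑' n₅ : ℕ+,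
      ((n₁ : ℝ) * n₂ * n₃ * n₄ * n₅) / (Nat.factorial (n₁ + n₂ + n₃ + n₄ + n₅ : ℕ))
      = (787 / 51840) * Real.exp 1 := by
  have pull : ∀ (c : ℝ) (F : ℕ+ → ℝ),
      (∑' n : ℕ+, (c * (n : ℕ)) * F n) = c * ∑' n : ℕ+, ((n : ℕ) : ℝ) * F n := by
    intro c F
    rw [← tsum_mul_left]
    exact tsum_congr fun n => by ring
  have L5 : ∀ n₁ n₂ n₃ n₄ : ℕ+,
      (∑' n₅ : ℕ+, ((n₁ : ℝ) * n₂ * n₃ * n₄ * n₅)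
          / (Nat.factorial (n₁ + n₂ + n₃ + n₄ + n₅ : ℕ)))
      = ((n₁ : ℝ) * n₂ * n₃ * n₄)
          * ∑' n₅ : ℕ+, ((n₅ : ℕ) : ℝ)
              * ((Nat.factorial ((n₁ : ℕ) + n₂ + n₃ + n₄ + n₅) : ℝ))⁻¹ := by
    intro n₁ n₂ n₃ n₄
    rw [← tsum_mul_left]
    exact tsum_congr fun n₅ => by rw [div_eq_mul_inv]; ring
  have L : (∑' n₁ : ℕ+, ∑' n₂ : ℕ+, ∑' n₃ : ℕ+, ∑' n₄ : ℕ+, ∑' n₅ : ℕ+,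
      ((n₁ : ℝ) * n₂ * n₃ * n₄ * n₅) / (Nat.factorial (n₁ + n₂ + n₃ + n₄ + n₅ : ℕ)))
      = ∑' n₁ : ℕ+, ((n₁ : ℕ) : ℝ) * ∑' n₂ : ℕ+, ((n₂ : ℕ) : ℝ) * ∑' n₃ : ℕ+, ((n₃ : ℕ) : ℝ)
          * ∑' n₄ : ℕ+, ((n₄ : ℕ) : ℝ) * ∑' n₅ : ℕ+, ((n₅ : ℕ) : ℝ)
              * ((Nat.factorial ((n₁ : ℕ) + n₂ + n₃ + n₄ + n₅) : ℝ))⁻¹ := by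
    refine tsum_congr fun n₁ => ?_
    calc ∑' n₂ : ℕ+, ∑' n₃ : ℕ+, ∑' n₄ : ℕ+, ∑' n₅ : ℕ+,
          ((n₁ : ℝ) * n₂ * n₃ * n₄ * n₅) / (Nat.factorial (n₁ + n₂ + n₃ + n₄ + n₅ : ℕ))
        = ∑' n₂ : ℕ+, ∑' n₃ : ℕ+, ∑' n₄ : ℕ+, ((n₁ : ℝ) * n₂ * n₃ * n₄)
            * ∑' n₅ : ℕ+, ((n₅ : ℕ) : ℝ)
              * ((Nat.factorial ((n₁ : ℕ) + n₂ + n₃ + n₄ + n₅) : ℝ))⁻¹ :=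
          tsum_congr fun n₂ => tsum_congr fun n₃ => tsum_congr fun n₄ => L5 n₁ n₂ n₃ n₄
      _ = ∑' n₂ : ℕ+, ∑' n₃ : ℕ+, ((n₁ : ℝ) * n₂ * n₃) * ∑' n₄ : ℕ+, ((n₄ : ℕ) : ℝ)
            * ∑' n₅ : ℕ+, ((n₅ : ℕ) : ℝ)
              * ((Nat.factorial ((n₁ : ℕ) + n₂ + n₃ + n₄ + n₅) : ℝ))⁻¹ :=
          tsum_congr fun n₂ => tsum_congr fun n₃ => pull _ _
      _ = ∑' n₂ : ℕ+, ((n₁ : ℝ) * n₂) * ∑' n₃ : ℕ+, ((n₃ : ℕ) : ℝ) * ∑' n₄ : ℕ+, ((n₄ : ℕ) : ℝ)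
            * ∑' n₅ : ℕ+, ((n₅ : ℕ) : ℝ)
              * ((Nat.factorial ((n₁ : ℕ) + n₂ + n₃ + n₄ + n₅) : ℝ))⁻¹ :=
          tsum_congr fun n₂ => pull _ _
      _ = ((n₁ : ℕ) : ℝ) * ∑' n₂ : ℕ+, ((n₂ : ℕ) : ℝ) * ∑' n₃ : ℕ+, ((n₃ : ℕ) : ℝ)
            * ∑' n₄ : ℕ+, ((n₄ : ℕ) : ℝ) * ∑' n₅ : ℕ+, ((n₅ : ℕ) : ℝ)
              * ((Nat.factorial ((n₁ : ℕ) + n₂ + n₃ + n₄ + n₅) : ℝ))⁻¹ := pull _ _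
  have E1 : ∀ m : ℕ, (Nest 1 (fun t => (((m + t).factorial : ℝ≥0∞))⁻¹)).toReal
      = ∑' n : ℕ+, ((n : ℕ) : ℝ) * ((Nat.factorial (m + (n : ℕ)) : ℝ))⁻¹ := by
    intro m
    have h := peel_nest 0 m (by omega)
    calc (Nest 1 (fun t => (((m + t).factorial : ℝ≥0∞))⁻¹)).toReal
        = ∑' n : ℕ+, ((n : ℕ) : ℝ)
            * (Nest 0 (fun t => (((m + (n : ℕ) + t).factorial : ℝ≥0∞))⁻¹)).toReal := h
      _ = ∑' n : ℕ+, ((n : ℕ) : ℝ) * ((Nat.factorial (m + (n : ℕ)) : ℝ))⁻¹ := by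
          refine tsum_congr fun n => ?_
          congr 1
          show ((((m + (n : ℕ) + 0).factorial : ℝ≥0∞))⁻¹).toReal = _
          rw [add_zero, ENNReal.toReal_inv, ENNReal.toReal_natCast]
  have E2 : ∀ m : ℕ, (Nest 2 (fun t => (((m + t).factorial : ℝ≥0∞))⁻¹)).toReal
      = ∑' n₄ : ℕ+, ((n₄ : ℕ) : ℝ) * ∑' n₅ : ℕ+, ((n₅ : ℕ) : ℝ)
          * ((Nat.factorial (m + (n₄ : ℕ) + (n₅ : ℕ)) : ℝ))⁻¹ := by
    intro m
    have h := peel_nest 1 m (by omega)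
    calc (Nest 2 (fun t => (((m + t).factorial : ℝ≥0∞))⁻¹)).toReal
        = ∑' n : ℕ+, ((n : ℕ) : ℝ)
            * (Nest 1 (fun t => (((m + (n : ℕ) + t).factorial : ℝ≥0∞))⁻¹)).toReal := h
      _ = _ := tsum_congr fun n => by rw [E1 (m + (n : ℕ))]
  have E3 : ∀ m : ℕ, (Nest 3 (fun t => (((m + t).factorial : ℝ≥0∞))⁻¹)).toReal
      = ∑' n₃ : ℕ+, ((n₃ : ℕ) : ℝ) * ∑' n₄ : ℕ+, ((n₄ : ℕ) : ℝ) * ∑' n₅ : ℕ+, ((n₅ : ℕ) : ℝ)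
          * ((Nat.factorial (m + (n₃ : ℕ) + (n₄ : ℕ) + (n₅ : ℕ)) : ℝ))⁻¹ := by
    intro m
    have h := peel_nest 2 m (by omega)
    calc (Nest 3 (fun t => (((m + t).factorial : ℝ≥0∞))⁻¹)).toReal
        = ∑' n : ℕ+, ((n : ℕ) : ℝ)
            * (Nest 2 (fun t => (((m + (n : ℕ) + t).factorial : ℝ≥0∞))⁻¹)).toReal := h
      _ = _ := tsum_congr fun n => by rw [E2 (m + (n : ℕ))]
  have E4 : ∀ m : ℕ, (Nest 4 (fun t => (((m + t).factorial : ℝ≥0∞))⁻¹)).toReal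
      = ∑' n₂ : ℕ+, ((n₂ : ℕ) : ℝ) * ∑' n₃ : ℕ+, ((n₃ : ℕ) : ℝ) * ∑' n₄ : ℕ+, ((n₄ : ℕ) : ℝ)
          * ∑' n₅ : ℕ+, ((n₅ : ℕ) : ℝ)
          * ((Nat.factorial (m + (n₂ : ℕ) + (n₃ : ℕ) + (n₄ : ℕ) + (n₅ : ℕ)) : ℝ))⁻¹ := by
    intro m
    have h := peel_nest 3 m (by omega)
    calc (Nest 4 (fun t => (((m + t).factorial : ℝ≥0∞))⁻¹)).toReal
        = ∑' n : ℕ+, ((n : ℕ) : ℝ)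
            * (Nest 3 (fun t => (((m + (n : ℕ) + t).factorial : ℝ≥0∞))⁻¹)).toReal := h
      _ = _ := tsum_congr fun n => by rw [E3 (m + (n : ℕ))]
  have E5 : ∀ m : ℕ, (Nest 5 (fun t => (((m + t).factorial : ℝ≥0∞))⁻¹)).toReal
      = ∑' n₁ : ℕ+, ((n₁ : ℕ) : ℝ) * ∑' n₂ : ℕ+, ((n₂ : ℕ) : ℝ) * ∑' n₃ : ℕ+, ((n₃ : ℕ) : ℝ)
          * ∑' n₄ : ℕ+, ((n₄ : ℕ) : ℝ) * ∑' n₅ : ℕ+, ((n₅ : ℕ) : ℝ)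
          * ((Nat.factorial (m + (n₁ : ℕ) + (n₂ : ℕ) + (n₃ : ℕ) + (n₄ : ℕ) + (n₅ : ℕ)) : ℝ))⁻¹ := by
    intro m
    have h := peel_nest 4 m (by omega)
    calc (Nest 5 (fun t => (((m + t).factorial : ℝ≥0∞))⁻¹)).toReal
        = ∑' n : ℕ+, ((n : ℕ) : ℝ)
            * (Nest 4 (fun t => (((m + (n : ℕ) + t).factorial : ℝ≥0∞))⁻¹)).toReal := h
      _ = _ := tsum_congr fun n => by rw [E4 (m + (n : ℕ))]
  have hval : (Nest 5 (fun t => ((t.factorial : ℝ≥0∞))⁻¹)).toReal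
      = (787 / 51840) * Real.exp 1 := by
    rw [nest5_value, ENNReal.toReal_ofReal (by positivity)]
  have hf0 : (fun t : ℕ => ((t.factorial : ℝ≥0∞))⁻¹)
      = (fun t => (((0 + t).factorial : ℝ≥0∞))⁻¹) := by
    funext t; rw [zero_add]
  rw [L, ← hval, hf0, E5 0]
  simp only [zero_add]
end

section
/- For every positive integer k, the series S_k := ∑_{n₁=1}^∞ ⋯ ∑_{n_k=1}^∞ (n₁⋯n_k)/(n₁+⋯+n_k)! equals (1/(2k-1)!) times the (2k-1)-st derivative of x ↦ x^{k-1} e^x evaluated at x = 1. -/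
open scoped ENNReal


private lemma hockey (a n : ℕ) : ∑ i ∈ Finset.range n, i.choose a = n.choose (a+1) := by
  induction n with
  | zero => simp
  | succ n ih =>
    rw [Finset.sum_range_succ, ih, Nat.choose_succ_succ, Nat.add_comm]

private lemma vand (a n : ℕ) : ∀ b,
    ∑ i ∈ Finset.range (n+1), i.choose a * (n - i).choose b = (n+1).choose (a+b+1) := by
  induction n with
  | zero =>
    intro b
    rcases a with _|a <;> rcases b with _|b <;> simp [Nat.choose]
  | succ n ih =>
    intro b
    rcases b with _|b
    · simp only [Nat.choose_zero_right, mul_one]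
      rw [hockey]
    · rw [Finset.sum_range_succ]
      have h1 : ∑ i ∈ Finset.range (n+1), i.choose a * (n + 1 - i).choose (b+1)
          = ∑ i ∈ Finset.range (n+1),
              (i.choose a * (n - i).choose b + i.choose a * (n - i).choose (b+1)) := by
        refine Finset.sum_congr rfl fun i hi => ?_
        have hi' : i ≤ n := Nat.lt_succ_iff.mp (Finset.mem_range.mp hi)
        rw [show n + 1 - i = (n - i) + 1 by omega, Nat.choose_succ_succ, Nat.mul_add]
      rw [h1, Finset.sum_add_distrib, ih, ih]
      rw [Nat.sub_self, Nat.choose_zero_succ, Nat.mul_zero, Nat.add_zero]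
      have e : a + (b+1) + 1 = (a + b + 1) + 1 := by omega
      rw [e, Nat.choose_succ_succ (n+1) (a+b+1)]

private lemma key (k t : ℕ) (hk : 1 ≤ k) :
    ∑ m ∈ Finset.range (t+1), m * ((t - m + k - 1).choose (2*k-1)) = (t+k).choose (2*k+1) := by
  have h := vand 1 (t + k - 1) (2*k - 1)
  have hn : t + k - 1 + 1 = t + k := by omega
  have ha : 1 + (2*k-1) + 1 = 2*k+1 := by omega
  rw [hn, ha] at h
  calc ∑ m ∈ Finset.range (t+1), m * ((t - m + k - 1).choose (2*k-1))
      = ∑ m ∈ Finset.range (t+1), m.choose 1 * ((t + k - 1 - m).choose (2*k-1)) := by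
        refine Finset.sum_congr rfl fun m hm => ?_
        have hm' : m ≤ t := Nat.lt_succ_iff.mp (Finset.mem_range.mp hm)
        rw [Nat.choose_one_right]
        congr 2
        omega
    _ = ∑ m ∈ Finset.range (t+k), m.choose 1 * ((t + k - 1 - m).choose (2*k-1)) := by
        refine Finset.sum_subset (Finset.range_subset_range.mpr (by omega : t + 1 ≤ t + k)) ?_
        intro i hi hni
        have h1 : i < t + k := Finset.mem_range.mp hi
        have h2 : t + 1 ≤ i := by
          by_contra hc
          exact hni (Finset.mem_range.mpr (by omega))
        have : (t + k - 1 - i).choose (2*k-1) = 0 :=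
          Nat.choose_eq_zero_of_lt (by omega)
        simp [this]
    _ = (t+k).choose (2*k+1) := h


private lemma Lrec (k : ℕ) (hk : 1 ≤ k) : ∀ c : ℕ,
    ∑' n : Fin k → ℕ, ((∏ i, (n i : ℝ≥0∞)) / (Nat.factorial (c + ∑ i, n i) : ℝ≥0∞))
      = ∑' s : ℕ, (((s + k - 1).choose (2*k-1) : ℝ≥0∞) / (Nat.factorial (c + s) : ℝ≥0∞)) := by
  induction k, hk using Nat.le_induction with
  | base =>
    intro c
    rw [← (Equiv.funUnique (Fin 1) ℕ).symm.tsum_eq]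
    refine tsum_congr fun s => ?_
    simp [Fin.prod_univ_one, Fin.sum_univ_one]
  | succ k hk ih =>
    intro c
    calc ∑' n : Fin (k+1) → ℕ, ((∏ i, (n i : ℝ≥0∞)) / (Nat.factorial (c + ∑ i, n i) : ℝ≥0∞))
        = ∑' p : ℕ × (Fin k → ℕ), (p.1 : ℝ≥0∞) *
            ((∏ i, (p.2 i : ℝ≥0∞)) / (Nat.factorial (c + (p.1 + ∑ i, p.2 i)) : ℝ≥0∞)) := by
          rw [← (Fin.consEquiv (fun _ : Fin (k+1) => ℕ)).tsum_eq]
          refine tsum_congr fun p => ?_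
          have h1 : ∀ i, ((Fin.cons p.1 p.2 : ∀ _ : Fin (k+1), ℕ) i : ℝ≥0∞)
              = (Fin.cons (p.1 : ℝ≥0∞) (fun j => (p.2 j : ℝ≥0∞)) : ∀ _ : Fin (k+1), ℝ≥0∞) i := by
            intro i
            induction i using Fin.cases <;> simp
          simp only [Fin.consEquiv_apply, Finset.prod_congr rfl (fun i _ => h1 i)]
          rw [Fin.prod_cons, Fin.sum_cons, mul_div_assoc]
      _ = ∑' m : ℕ, ∑' n : Fin k → ℕ, (m : ℝ≥0∞) *
            ((∏ i, (n i : ℝ≥0∞)) / (Nat.factorial (c + (m + ∑ i, n i)) : ℝ≥0∞)) :=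
          ENNReal.tsum_prod'
      _ = ∑' m : ℕ, ∑' s : ℕ, (m : ℝ≥0∞) *
            (((s + k - 1).choose (2*k-1) : ℝ≥0∞) / (Nat.factorial ((c + m) + s) : ℝ≥0∞)) := by
          refine tsum_congr fun m => ?_
          simp only [← Nat.add_assoc]
          rw [ENNReal.tsum_mul_left, ENNReal.tsum_mul_left, ih (c + m)]
      _ = ∑' p : ℕ × ℕ, (p.1 : ℝ≥0∞) *
            (((p.2 + k - 1).choose (2*k-1) : ℝ≥0∞) / (Nat.factorial ((c + p.1) + p.2) : ℝ≥0∞)) :=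
          (ENNReal.tsum_prod' (f := fun p : ℕ × ℕ => (p.1 : ℝ≥0∞) *
            (((p.2 + k - 1).choose (2*k-1) : ℝ≥0∞)
              / (Nat.factorial ((c + p.1) + p.2) : ℝ≥0∞)))).symm
      _ = ∑' t : ℕ, ∑' x : (Finset.HasAntidiagonal.antidiagonal t : Finset (ℕ × ℕ)),
            ((x : ℕ × ℕ).1 : ℝ≥0∞) *
            ((((x : ℕ × ℕ).2 + k - 1).choose (2*k-1) : ℝ≥0∞)
              / (Nat.factorial ((c + (x : ℕ × ℕ).1) + (x : ℕ × ℕ).2) : ℝ≥0∞)) := by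
          rw [← Finset.HasAntidiagonal.sigmaAntidiagonalEquivProd.tsum_eq, ENNReal.tsum_sigma']
          simp only [Finset.HasAntidiagonal.sigmaAntidiagonalEquivProd_apply]
      _ = ∑' t : ℕ, (((t + (k+1) - 1).choose (2*(k+1)-1) : ℝ≥0∞)
            / (Nat.factorial (c + t) : ℝ≥0∞)) := by
          refine tsum_congr fun t => ?_
          rw [Finset.tsum_subtype (Finset.HasAntidiagonal.antidiagonal t) (fun p : ℕ × ℕ => (p.1 : ℝ≥0∞) *
            (((p.2 + k - 1).choose (2*k-1) : ℝ≥0∞)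
              / (Nat.factorial ((c + p.1) + p.2) : ℝ≥0∞)))]
          have h2 : ∀ p ∈ Finset.HasAntidiagonal.antidiagonal t, (p.1 : ℝ≥0∞) *
              (((p.2 + k - 1).choose (2*k-1) : ℝ≥0∞)
                / (Nat.factorial ((c + p.1) + p.2) : ℝ≥0∞))
              = ((p.1 * ((p.2 + k - 1).choose (2*k-1)) : ℕ) : ℝ≥0∞)
                / (Nat.factorial (c + t) : ℝ≥0∞) := by
            intro p hp
            have hpt : p.1 + p.2 = t := Finset.HasAntidiagonal.mem_antidiagonal.mp hp
            rw [show (c + p.1) + p.2 = c + t by omega]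
            push_cast
            rw [mul_div_assoc]
          rw [Finset.sum_congr rfl h2]
          simp only [div_eq_mul_inv]
          rw [← Finset.sum_mul, ← Nat.cast_sum,
            Finset.Nat.sum_antidiagonal_eq_sum_range_succ_mk]
          have h3 : ∑ m ∈ Finset.range (t+1), m * ((t - m + k - 1).choose (2*k-1))
              = (t+k).choose (2*k+1) := key k t hk
          rw [h3, show t + (k+1) - 1 = t + k by omega, show 2*(k+1)-1 = 2*k+1 by omega]


private lemma expone : Real.exp 1 = ∑' t : ℕ, (1 : ℝ) / t.factorial := by
  rw [Real.exp_eq_exp_ℝ, NormedSpace.exp_eq_tsum_div]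
  simp [one_pow]

private lemma choose_div_fact (i t : ℕ) :
    (((t + i).choose i : ℝ)) / (t + i).factorial = (1 / i.factorial) * (1 / t.factorial) := by
  have h := Nat.add_choose_mul_factorial_mul_factorial t i
  have h' : (((t + i).choose i : ℝ)) * t.factorial * i.factorial = (t + i).factorial := by
    exact_mod_cast congrArg (Nat.cast (R := ℝ)) h
  have h1 : (0:ℝ) < t.factorial := by exact_mod_cast t.factorial_pos
  have h2 : (0:ℝ) < i.factorial := by exact_mod_cast i.factorial_pos
  have h3 : (0:ℝ) < (t+i).factorial := by exact_mod_cast (t+i).factorial_pos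
  field_simp
  nlinarith [h']

private lemma support_choose (i : ℕ) :
    ∀ x ∉ Set.range (· + i), ((x.choose i : ℝ)) / x.factorial = 0 := by
  intro x hx
  have hxi : x < i := by
    by_contra hc
    exact hx ⟨x - i, by show x - i + i = x; omega⟩
  rw [Nat.choose_eq_zero_of_lt hxi]
  simp

private lemma summE (i : ℕ) : Summable (fun s : ℕ => ((s.choose i : ℝ)) / s.factorial) := by
  rw [← Function.Injective.summable_iff (add_left_injective i) (support_choose i)]
  have : (fun s : ℕ => ((s.choose i : ℝ)) / s.factorial) ∘ (· + i)
      = fun t : ℕ => (1 / (i.factorial:ℝ)) * (1 / (t.factorial:ℝ)) := by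
    funext t
    simp only [Function.comp_apply]
    exact choose_div_fact i t
  rw [this]
  apply Summable.mul_left
  have := Real.summable_pow_div_factorial 1
  simpa using this

private lemma E (i : ℕ) :
    ∑' s : ℕ, ((s.choose i : ℝ)) / s.factorial = Real.exp 1 / i.factorial := by
  rw [← Function.Injective.tsum_eq (add_left_injective i) (f := fun s : ℕ => ((s.choose i : ℝ)) / s.factorial)]
  · have h : ∀ t : ℕ, (((t + i).choose i : ℝ)) / (t + i).factorial
        = (1 / i.factorial) * (1 / t.factorial) := choose_div_fact i
    rw [tsum_congr h, tsum_mul_left, ← expone]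
    ring
  · intro x hx
    by_contra hc
    exact hx (support_choose i x hc)


private lemma iterDeriv (a : ℕ) (n : ℕ) :
    iteratedDeriv n (fun x : ℝ => x^a * Real.exp x)
      = fun x : ℝ => (∑ j ∈ Finset.range (n+1),
          ((n.choose j : ℝ) * (a.descFactorial j : ℝ)) * x^(a-j)) * Real.exp x := by
  induction n with
  | zero =>
    funext x
    simp
  | succ n ih =>
    funext x
    rw [iteratedDeriv_succ, ih]
    have hdiff : ∀ j : ℕ, DifferentiableAt ℝ
        (fun x : ℝ => ((n.choose j : ℝ) * (a.descFactorial j : ℝ)) * x^(a-j)) x :=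
      fun j => (differentiableAt_pow _).const_mul _
    have hS : DifferentiableAt ℝ (fun x : ℝ => ∑ j ∈ Finset.range (n+1),
        ((n.choose j : ℝ) * (a.descFactorial j : ℝ)) * x^(a-j)) x :=
      DifferentiableAt.fun_sum fun j _ => hdiff j
    rw [deriv_fun_mul hS Real.differentiable_exp.differentiableAt]
    rw [deriv_fun_sum (fun j _ => hdiff j)]
    have hder : ∀ j ∈ Finset.range (n+1),
        deriv (fun x : ℝ => ((n.choose j : ℝ) * (a.descFactorial j : ℝ)) * x^(a-j)) x
        = ((n.choose j : ℝ) * (a.descFactorial j : ℝ)) * (((a-j : ℕ) : ℝ) * x^(a-j-1)) := by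
      intro j _
      rw [deriv_const_mul _ (differentiableAt_pow _), deriv_pow_field]
    rw [Finset.sum_congr rfl hder, Real.deriv_exp]
    rw [← add_mul]
    congr 1
    have hsplit : ∑ j ∈ Finset.range (n+1),
          ((n.choose j : ℝ) * (a.descFactorial j : ℝ)) * x^(a-j)
        = (∑ j ∈ Finset.range (n+1),
            ((n.choose (j+1) : ℝ) * (a.descFactorial (j+1) : ℝ)) * x^(a-(j+1)))
          + ((n.choose 0 : ℝ) * (a.descFactorial 0 : ℝ)) * x^(a-0) := by
      have h0 : ∑ j ∈ Finset.range (n+2),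
            ((n.choose j : ℝ) * (a.descFactorial j : ℝ)) * x^(a-j)
          = ∑ j ∈ Finset.range (n+1),
            ((n.choose j : ℝ) * (a.descFactorial j : ℝ)) * x^(a-j) := by
        rw [Finset.sum_range_succ, Nat.choose_succ_self]
        simp
      rw [← h0, Finset.sum_range_succ']
    rw [hsplit, ← add_assoc, ← Finset.sum_add_distrib]
    have halg : ∀ j ∈ Finset.range (n+1),
        ((n.choose j : ℝ) * (a.descFactorial j : ℝ)) * (((a-j : ℕ) : ℝ) * x^(a-j-1))
          + ((n.choose (j+1) : ℝ) * (a.descFactorial (j+1) : ℝ)) * x^(a-(j+1))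
        = (((n+1).choose (j+1) : ℝ) * (a.descFactorial (j+1) : ℝ)) * x^(a-(j+1)) := by
      intro j _
      have h1 : (n+1).choose (j+1) = n.choose j + n.choose (j+1) := Nat.choose_succ_succ n j
      have h2 : a.descFactorial (j+1) = (a - j) * a.descFactorial j := Nat.descFactorial_succ a j
      rw [show a - j - 1 = a - (j+1) by omega]
      rw [h1, h2]
      push_cast
      ring
    rw [Finset.sum_congr rfl halg]
    have hlast : ((n.choose 0 : ℝ) * (a.descFactorial 0 : ℝ)) * x^(a-0)
        = (((n+1).choose 0 : ℝ) * (a.descFactorial 0 : ℝ)) * x^(a-0) := by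
      simp
    rw [hlast]
    exact (Finset.sum_range_succ' (fun j => ((n+1).choose j : ℝ) * (a.descFactorial j : ℝ) * x^(a-j)) (n+1)).symm


theorem stmt_19 (k : ℕ) (hk : 1 ≤ k) :
    ∑' n : Fin k → ℕ+,
        (∏ i, (n i : ℝ)) / (Nat.factorial (∑ i, (n i : ℕ)))
      = (1 / (Nat.factorial (2 * k - 1))) *
          iteratedDeriv (2 * k - 1) (fun x : ℝ => x ^ (k - 1) * Real.exp x) 1 := by
  classical
  -- the target real series
  set A : ℝ := ∑' s : ℕ, ((s + k - 1).choose (2*k-1) : ℝ) / s.factorial with hAdef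
  have hfacpos : ∀ m : ℕ, (0:ℝ) < m.factorial := fun m => by exact_mod_cast m.factorial_pos
  -- Vandermonde expansion of the terms
  have h1 : ∀ s : ℕ, ((s + k - 1).choose (2*k-1) : ℝ) / s.factorial
      = ∑ ij ∈ Finset.HasAntidiagonal.antidiagonal (2*k-1),
          ((k-1).choose ij.2 : ℝ) * ((s.choose ij.1 : ℝ) / s.factorial) := by
    intro s
    rw [show s + k - 1 = s + (k-1) by omega, Nat.add_choose_eq]
    push_cast
    rw [Finset.sum_div]
    exact Finset.sum_congr rfl fun ij _ => by ring
  have hsumm_each : ∀ ij ∈ Finset.HasAntidiagonal.antidiagonal (2*k-1),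
      Summable (fun s : ℕ => ((k-1).choose ij.2 : ℝ) * ((s.choose ij.1 : ℝ) / s.factorial)) :=
    fun ij _ => (summE ij.1).mul_left _
  have hsummA : Summable (fun s : ℕ => ((s + k - 1).choose (2*k-1) : ℝ) / s.factorial) := by
    refine Summable.congr (summable_sum hsumm_each) ?_
    intro s
    exact (h1 s).symm
  have hA2 : A = ∑ ij ∈ Finset.HasAntidiagonal.antidiagonal (2*k-1),
      ((k-1).choose ij.2 : ℝ) * (Real.exp 1 / ij.1.factorial) := by
    rw [hAdef, tsum_congr h1, Summable.tsum_finsetSum hsumm_each]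
    refine Finset.sum_congr rfl fun ij _ => ?_
    rw [tsum_mul_left, E ij.1]
  have hAnonneg : 0 ≤ A :=
    tsum_nonneg fun s => div_nonneg (by positivity) (le_of_lt (hfacpos s))
  -- the left-hand side equals A, via ENNReal
  have hg0 : ∀ n : Fin k → ℕ+,
      (0:ℝ) ≤ (∏ i, (n i : ℝ)) / (Nat.factorial (∑ i, (n i : ℕ))) := by
    intro n
    apply div_nonneg _ (le_of_lt (hfacpos _))
    exact Finset.prod_nonneg fun i _ => by positivity
  have hofReal : ∀ n : Fin k → ℕ+,
      ENNReal.ofReal ((∏ i, (n i : ℝ)) / (Nat.factorial (∑ i, (n i : ℕ))))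
        = (∏ i, ((n i : ℕ) : ℝ≥0∞)) / ((Nat.factorial (∑ i, (n i : ℕ))) : ℝ≥0∞) := by
    intro n
    rw [show (∏ i, (n i : ℝ)) = ((∏ i, (n i : ℕ) : ℕ) : ℝ) by push_cast; rfl]
    rw [ENNReal.ofReal_div_of_pos (hfacpos _), ENNReal.ofReal_natCast, ENNReal.ofReal_natCast]
    push_cast
    rfl
  have hinj : Function.Injective (fun (n : Fin k → ℕ+) (i : Fin k) => (n i : ℕ)) := by
    intro n m h
    funext i
    exact PNat.coe_injective (congrFun h i)
  have hsupp : Function.support (fun m : Fin k → ℕ =>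
      (∏ i, (m i : ℝ≥0∞)) / ((Nat.factorial (∑ i, m i)) : ℝ≥0∞))
      ⊆ Set.range (fun (n : Fin k → ℕ+) (i : Fin k) => (n i : ℕ)) := by
    intro m hm
    by_contra hc
    apply hm
    have hzero : ∃ i, m i = 0 := by
      by_contra hz
      push_neg at hz
      exact hc ⟨fun i => ⟨m i, Nat.pos_of_ne_zero (hz i)⟩, rfl⟩
    obtain ⟨i, hi⟩ := hzero
    have : (∏ j, (m j : ℝ≥0∞)) = 0 := by
      apply Finset.prod_eq_zero (Finset.mem_univ i)
      rw [hi]; simp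
    simp [this]
  have hbig : ∑' n : Fin k → ℕ+,
      ENNReal.ofReal ((∏ i, (n i : ℝ)) / (Nat.factorial (∑ i, (n i : ℕ))))
      = ENNReal.ofReal A := by
    calc ∑' n : Fin k → ℕ+,
        ENNReal.ofReal ((∏ i, (n i : ℝ)) / (Nat.factorial (∑ i, (n i : ℕ))))
        = ∑' n : Fin k → ℕ+, (∏ i, ((n i : ℕ) : ℝ≥0∞))
            / ((Nat.factorial (∑ i, (n i : ℕ))) : ℝ≥0∞) := tsum_congr hofReal
      _ = ∑' m : Fin k → ℕ, (∏ i, (m i : ℝ≥0∞)) / ((Nat.factorial (∑ i, m i)) : ℝ≥0∞) :=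
          hinj.tsum_eq hsupp
      _ = ∑' s : ℕ, (((s + k - 1).choose (2*k-1) : ℝ≥0∞) / ((Nat.factorial s) : ℝ≥0∞)) := by
          have := Lrec k hk 0
          simpa using this
      _ = ∑' s : ℕ, ENNReal.ofReal (((s + k - 1).choose (2*k-1) : ℝ) / s.factorial) := by
          refine tsum_congr fun s => ?_
          rw [ENNReal.ofReal_div_of_pos (hfacpos _), ENNReal.ofReal_natCast,
            ENNReal.ofReal_natCast]
      _ = ENNReal.ofReal A := by
          rw [← ENNReal.ofReal_tsum_of_nonneg
            (fun s => div_nonneg (by positivity) (le_of_lt (hfacpos s))) hsummA]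
  have hne : (∑' n : Fin k → ℕ+,
      ENNReal.ofReal ((∏ i, (n i : ℝ)) / (Nat.factorial (∑ i, (n i : ℕ))))) ≠ ⊤ := by
    rw [hbig]; exact ENNReal.ofReal_ne_top
  have hgsum : Summable (fun n : Fin k → ℕ+ =>
      (∏ i, (n i : ℝ)) / (Nat.factorial (∑ i, (n i : ℕ)))) := by
    refine (summable_congr ?_).mp (ENNReal.summable_toReal hne)
    intro n
    exact ENNReal.toReal_ofReal (hg0 n)
  have hLHS : (∑' n : Fin k → ℕ+,
      (∏ i, (n i : ℝ)) / (Nat.factorial (∑ i, (n i : ℕ)))) = A := by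
    have h := ENNReal.ofReal_tsum_of_nonneg hg0 hgsum
    rw [hbig] at h
    exact (ENNReal.ofReal_eq_ofReal_iff (tsum_nonneg hg0) hAnonneg).mp h
  rw [hLHS]
  -- now compute the right-hand side
  rw [iterDeriv (k-1) (2*k-1)]
  simp only [one_pow, mul_one]
  rw [hA2, Finset.Nat.sum_antidiagonal_eq_sum_range_succ_mk]
  rw [← Finset.sum_range_reflect]
  rw [Finset.sum_mul, Finset.mul_sum]
  refine Finset.sum_congr rfl fun j hjm => ?_
  have hj : j ≤ 2*k-1 := Nat.lt_succ_iff.mp (Finset.mem_range.mp hjm)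
  rw [show (2*k-1).succ - 1 - j = 2*k-1-j by omega, show 2*k-1 - (2*k-1-j) = j by omega]
  have e1 : ((2*k-1).choose j * j.factorial * (2*k-1-j).factorial : ℕ)
      = (2*k-1).factorial := Nat.choose_mul_factorial_mul_factorial hj
  have e2 : (k-1).descFactorial j = j.factorial * (k-1).choose j :=
    Nat.descFactorial_eq_factorial_mul_choose _ _
  have e1' : (((2*k-1).choose j : ℝ)) * j.factorial * (2*k-1-j).factorial
      = (2*k-1).factorial := by exact_mod_cast congrArg (Nat.cast (R := ℝ)) e1
  rw [e2]
  push_cast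
  have hb : ((j.factorial : ℝ)) ≠ 0 := ne_of_gt (hfacpos j)
  have hc : (((2*k-1-j).factorial : ℝ)) ≠ 0 := ne_of_gt (hfacpos _)
  have hF : (((2*k-1).factorial : ℝ)) ≠ 0 := ne_of_gt (hfacpos _)
  field_simp
  linear_combination (-((k-1).choose j : ℝ)) * e1'
end
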